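/- arXiv:1804.09019 — 3 statements merged into one kernel-verified Lean document; each statement's English description precedes it below -/
import Mathlib

section
/- A finite simple graph is chordal if and only if every cycle of length greater than 3 has an induced 1-chord triangle, i.e., contains three consecutive vertices of the cycle whose first and third vertices are joined by a chord, forming a triangle with exactly one chord of the cycle. -/
/-- A cycle of length `n` in `G`, given as an injective map from `ZMod n`
whose consecutive images are adjacent. -/
def SimpleGraph.IsCycleEmb {V : Type*} (G : SimpleGraph V) {n : ℕ} (f : ZMod n → V) : Prop :=
  Function.Injective f ∧ ∀ i : ZMod n, G.Adj (f i) (f (i + 1))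

/-- A chord of the cycle `f`: an edge of `G` joining two non-consecutive
vertices of the cycle. -/
def SimpleGraph.IsChordOf {V : Type*} (G : SimpleGraph V) {n : ℕ} (f : ZMod n → V)
    (i j : ZMod n) : Prop :=
  G.Adj (f i) (f j) ∧ j ≠ i + 1 ∧ i ≠ j + 1

/-- A graph is chordal if every cycle of length at least 4 has a chord,
i.e. it has no chordless cycle of size 4 or more. -/
def SimpleGraph.Chordal {V : Type*} (G : SimpleGraph V) : Prop :=
  ∀ (n : ℕ), 4 ≤ n → ∀ f : ZMod n → V, G.IsCycleEmb f → ∃ i j, G.IsChordOf f i j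

/-- A strong chord of the (even) cycle `f`: a chord joining two vertices whose
distance apart along the cycle is odd. -/
def SimpleGraph.IsStrongChordOf {V : Type*} (G : SimpleGraph V) {n : ℕ} (f : ZMod n → V)
    (i j : ZMod n) : Prop :=
  G.IsChordOf f i j ∧ Odd (j - i).val

/-- A graph is strongly chordal if it is chordal and every even cycle of length
at least 6 has a strong chord. -/
def SimpleGraph.StronglyChordal {V : Type*} (G : SimpleGraph V) : Prop :=
  G.Chordal ∧ ∀ (n : ℕ), 6 ≤ n → Even n → ∀ f : ZMod n → V, G.IsCycleEmb f →
    ∃ i j, G.IsStrongChordOf f i j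

/-- The closed neighborhood `N[v]` of a vertex `v`. -/
def SimpleGraph.closedNbhd {V : Type*} (G : SimpleGraph V) (v : V) : Set V :=
  insert v (G.neighborSet v)

/-- A vertex is simplicial if its open neighborhood induces a clique. -/
def SimpleGraph.IsSimplicialVertex {V : Type*} (G : SimpleGraph V) (v : V) : Prop :=
  ∀ u w, G.Adj v u → G.Adj v w → u ≠ w → G.Adj u w

/-- A vertex is simple if the vertices in its closed neighborhood are pairwise
compatible, i.e. their closed neighborhoods are linearly ordered by inclusion. -/
def SimpleGraph.IsSimpleVertex {V : Type*} (G : SimpleGraph V) (v : V) : Prop :=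
  ∀ u w, u ∈ G.closedNbhd v → w ∈ G.closedNbhd v →
    G.closedNbhd u ⊆ G.closedNbhd w ∨ G.closedNbhd w ⊆ G.closedNbhd u

/-- A perfect elimination ordering: each `σ i` is simplicial in the subgraph of `G`
induced by the vertex set `{σ j : i ≤ j}`. -/
def SimpleGraph.IsPerfectElimOrdering {V : Type*} [Fintype V] (G : SimpleGraph V)
    (σ : Fin (Fintype.card V) ≃ V) : Prop :=
  ∀ i : Fin (Fintype.card V),
    (G.induce (σ '' {j | i ≤ j})).IsSimplicialVertex ⟨σ i, ⟨i, le_refl i, rfl⟩⟩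

/-- A strong elimination ordering: for all `i < j` and `k < l`, if
`σ k, σ l ∈ N[σ i]` and `σ k ∈ N[σ j]`, then `σ l ∈ N[σ j]`. -/
def SimpleGraph.IsStrongElimOrdering {V : Type*} [Fintype V] (G : SimpleGraph V)
    (σ : Fin (Fintype.card V) ≃ V) : Prop :=
  ∀ i j k l : Fin (Fintype.card V), i < j → k < l →
    σ k ∈ G.closedNbhd (σ i) → σ l ∈ G.closedNbhd (σ i) →
    σ k ∈ G.closedNbhd (σ j) → σ l ∈ G.closedNbhd (σ j)

/-- A finite simple graph is chordal iff every cycle of length greater than 3 has an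
induced 1-chord triangle: three consecutive vertices of the cycle whose first and third
vertices are joined by a chord, forming a triangle with the two consecutive cycle edges. -/
theorem chordal_iff_one_chord_triangle {V : Type*} [Fintype V] (G : SimpleGraph V) :
    G.Chordal ↔ ∀ (n : ℕ), 4 ≤ n → ∀ f : ZMod n → V, G.IsCycleEmb f →
      ∃ i : ZMod n, G.IsChordOf f i (i + 2) := by
  constructor
  · intro hG n hn f hf
    haveI : NeZero n := ⟨by omega⟩
    classical
    set S : Set ℕ := {m | ∃ i j : ZMod n, G.IsChordOf f i j ∧ (j - i).val = m} with hSdef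
    have hSne : S.Nonempty := by
      obtain ⟨i, j, h⟩ := hG n hn f hf
      exact ⟨(j - i).val, i, j, h, rfl⟩
    obtain ⟨D, hDS, hmin⟩ := Nat.lt_wfRel.wf.has_min S hSne
    obtain ⟨i, j, hij, hDval⟩ := hDS
    have hji : G.IsChordOf f j i := ⟨hij.1.symm, hij.2.2, hij.2.1⟩
    have hne : j - i ≠ 0 := sub_ne_zero_of_ne (fun h => hij.1.ne (by rw [h]))
    have hD0 : D ≠ 0 := by
      rw [← hDval]; simpa [ZMod.val_eq_zero] using hne
    have hDn : D < n := hDval ▸ (j - i).val_lt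
    have hD1 : D ≠ 1 := by
      intro h1
      apply hij.2.1
      have : j - i = ((1 : ℕ) : ZMod n) := by
        apply ZMod.val_injective
        rw [hDval, h1, ZMod.val_cast_of_lt (by omega)]
      rw [sub_eq_iff_eq_add] at this
      rw [this]; push_cast; ring
    have hnD : n - D ∈ S := by
      refine ⟨j, i, hji, ?_⟩
      have : i - j = -(j - i) := by ring
      rw [this, ZMod.neg_val, if_neg hne, hDval]
    have hDle : D ≤ n - D := not_lt.mp (hmin _ hnD)
    by_cases hD2 : D = 2
    · refine ⟨i, ?_⟩
      have : j = i + 2 := by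
        have h2 : j - i = ((2 : ℕ) : ZMod n) := by
          apply ZMod.val_injective
          rw [hDval, hD2, ZMod.val_cast_of_lt (by omega)]
        rw [sub_eq_iff_eq_add] at h2
        rw [h2]; push_cast; ring
      rwa [this] at hij
    · -- D ≥ 3 : build the shorter cycle and derive a contradiction
      exfalso
      have hD3 : 3 ≤ D := by omega
      have hD1n : D + 1 < n := by omega
      haveI : Fact (1 < D + 1) := ⟨by omega⟩
      set g : ZMod (D + 1) → V := fun k => f (i + ((k.val : ℕ) : ZMod n)) with hgdef
      have hkey : ∀ a b : ℕ, a < n → b < n →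
          i + ((a : ℕ) : ZMod n) = i + ((b : ℕ) : ZMod n) → a = b := by
        intro a b ha hb h
        have := add_left_cancel h
        have := congrArg ZMod.val this
        rwa [ZMod.val_cast_of_lt ha, ZMod.val_cast_of_lt hb] at this
      have hvlt : ∀ k : ZMod (D + 1), k.val ≤ D := fun k => Nat.lt_succ_iff.mp k.val_lt
      have hginj : Function.Injective g := by
        intro p q h
        have h2 := hf.1 h
        have := hkey p.val q.val (by have := hvlt p; omega) (by have := hvlt q; omega) h2
        exact ZMod.val_injective _ this
      have hDcast : ((D : ℕ) : ZMod n) = j - i := by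
        rw [← hDval, ZMod.natCast_zmod_val]
      have hgadj : ∀ k : ZMod (D + 1), G.Adj (g k) (g (k + 1)) := by
        intro k
        rcases eq_or_lt_of_le (hvlt k) with hk | hk
        · -- wrap-around edge: this is the chord of the original cycle
          have hk1 : k + 1 = 0 := by
            have : k = ((D : ℕ) : ZMod (D + 1)) := by
              apply ZMod.val_injective
              rw [hk, ZMod.val_cast_of_lt (Nat.lt_succ_self D)]
            rw [this]
            have e : ((D : ℕ) : ZMod (D + 1)) + 1 = (((D + 1 : ℕ)) : ZMod (D + 1)) := by
              push_cast; ring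
            rw [e, ZMod.natCast_self]
          have e1 : g k = f j := by
            simp only [hgdef, hk, hDcast]
            congr 1; ring
          have e2 : g (k + 1) = f i := by
            simp only [hgdef, hk1, ZMod.val_zero, Nat.cast_zero, add_zero]
          rw [e1, e2]; exact hij.1.symm
        · have hk1 : (k + 1).val = k.val + 1 := by
            rw [ZMod.val_add, ZMod.val_one, Nat.mod_eq_of_lt (by omega)]
          have e2 : g (k + 1) = f ((i + ((k.val : ℕ) : ZMod n)) + 1) := by
            simp only [hgdef, hk1]
            congr 1; push_cast; ring
          rw [e2]; exact hf.2 _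
      -- get a chord of g
      obtain ⟨p, q, hpq⟩ := hG (D + 1) (by omega) g ⟨hginj, hgadj⟩
      -- main claim: no chord of g can exist
      have claim : ∀ p q : ZMod (D + 1), p.val < q.val → G.IsChordOf g p q → False := by
        intro p q hlt h
        set a := p.val with hadef
        set b := q.val with hbdef
        have hbD : b ≤ D := hvlt q
        have h2 : a + 2 ≤ b := by
          by_contra hcon
          have hb1 : b = a + 1 := by omega
          apply h.2.1
          apply ZMod.val_injective
          rw [← hbdef, hb1, ZMod.val_add, ZMod.val_one, Nat.mod_eq_of_lt (by omega)]
        have h3 : a ≠ 0 ∨ b ≠ D := by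
          by_contra hcon
          push_neg at hcon
          apply h.2.2
          have hp0 : p = 0 := by
            apply ZMod.val_injective; rw [← hadef, hcon.1, ZMod.val_zero]
          have hqD : q = ((D : ℕ) : ZMod (D + 1)) := by
            apply ZMod.val_injective
            rw [← hbdef, hcon.2, ZMod.val_cast_of_lt (Nat.lt_succ_self D)]
          rw [hp0, hqD]
          have e : ((D : ℕ) : ZMod (D + 1)) + 1 = (((D + 1 : ℕ)) : ZMod (D + 1)) := by
            push_cast; ring
          rw [e, ZMod.natCast_self]
        have hba : b - a < D := by omega
        -- build the chord of f
        have hadj : G.Adj (f (i + ((a : ℕ) : ZMod n))) (f (i + ((b : ℕ) : ZMod n))) := h.1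
        have hc1 : i + ((b : ℕ) : ZMod n) ≠ (i + ((a : ℕ) : ZMod n)) + 1 := by
          intro e
          have e' : i + ((b : ℕ) : ZMod n) = i + (((a + 1 : ℕ)) : ZMod n) := by
            rw [e]; push_cast; ring
          have := hkey b (a + 1) (by omega) (by omega) e'
          omega
        have hc2 : i + ((a : ℕ) : ZMod n) ≠ (i + ((b : ℕ) : ZMod n)) + 1 := by
          intro e
          have e' : i + ((a : ℕ) : ZMod n) = i + (((b + 1 : ℕ)) : ZMod n) := by
            rw [e]; push_cast; ring
          have := hkey a (b + 1) (by omega) (by omega) e'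
          omega
        have hdist : ((i + ((b : ℕ) : ZMod n)) - (i + ((a : ℕ) : ZMod n))).val = b - a := by
          have e : (i + ((b : ℕ) : ZMod n)) - (i + ((a : ℕ) : ZMod n))
              = (((b - a : ℕ)) : ZMod n) := by
            rw [Nat.cast_sub (by omega)]; ring
          rw [e, ZMod.val_cast_of_lt (by omega)]
        exact hmin (b - a) ⟨_, _, ⟨hadj, hc1, hc2⟩, hdist⟩ (show b - a < D by omega)
      rcases lt_trichotomy p.val q.val with hlt | heq | hgt
      · exact claim p q hlt hpq
      · have : p = q := ZMod.val_injective _ heq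
        rw [this] at hpq
        exact G.irrefl hpq.1
      · exact claim q p hgt ⟨hpq.1.symm, hpq.2.2, hpq.2.1⟩
  · intro h n hn f hf
    obtain ⟨i, hi⟩ := h n hn f hf
    exact ⟨i, i + 2, hi⟩
end

section
/- A finite simple graph is strongly chordal if and only if it has no chordless cycle on four vertices and every cycle on at least five vertices has an induced 2-chord triangle, i.e., a triangle formed by one edge of the cycle together with two chords of the cycle. -/
namespace TwoChordAux

variable {V : Type*} {G : SimpleGraph V}

lemma chord_symm {n : ℕ} {f : ZMod n → V} {i j : ZMod n} (h : G.IsChordOf f i j) :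
    G.IsChordOf f j i := ⟨h.1.symm, h.2.2, h.2.1⟩

lemma natCast_inj' {n a b : ℕ} (ha : a < n) (hb : b < n) (h : (a : ZMod n) = b) : a = b := by
  rw [← ZMod.val_cast_of_lt ha, ← ZMod.val_cast_of_lt hb, h]

lemma val_succ {m : ℕ} [NeZero m] {u : ZMod m} (h : u.val + 1 < m) : (u + 1).val = u.val + 1 := by
  have h1 : (1 : ZMod m).val = 1 := by
    haveI : Fact (1 < m) := ⟨by omega⟩
    exact ZMod.val_one m
  rw [ZMod.val_add, h1, Nat.mod_eq_of_lt h]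

lemma succ_of_val {m : ℕ} [NeZero m] {u v : ZMod m} (h : v.val = u.val + 1) : v = u + 1 := by
  apply ZMod.val_injective
  rw [val_succ (by rw [← h]; exact ZMod.val_lt v), h]

/-- transfer a chord of the sub-cycle `k ↦ f (p + k.val)` to a chord of `f`. -/
lemma chord_transfer {n m : ℕ} [NeZero m] (hmn : m < n) {f : ZMod n → V} (p : ZMod n)
    {u v : ZMod m}
    (h : G.IsChordOf (fun k : ZMod m => f (p + (k.val : ZMod n))) u v) :
    G.IsChordOf f (p + (u.val : ZMod n)) (p + (v.val : ZMod n)) := by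
  haveI : NeZero n := ⟨by omega⟩
  obtain ⟨hadj, h1, h2⟩ := h
  have key : ∀ a b : ZMod m, b = a + 1 ∨ p + (b.val : ZMod n) ≠ p + (a.val : ZMod n) + 1 := by
    intro a b
    by_cases hE : p + (b.val : ZMod n) = p + (a.val : ZMod n) + 1
    · left
      have : (b.val : ZMod n) = ((a.val + 1 : ℕ) : ZMod n) := by
        push_cast
        rw [add_assoc] at hE
        exact add_left_cancel hE
      have hb : b.val = a.val + 1 :=
        natCast_inj' (lt_trans (ZMod.val_lt b) hmn)
          (by have := ZMod.val_lt a; omega) this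
      exact succ_of_val hb
    · right; exact hE
  refine ⟨hadj, ?_, ?_⟩
  · rcases key u v with hc | hc
    · exact absurd hc h1
    · exact hc
  · rcases key v u with hc | hc
    · exact absurd hc h2
    · exact hc

/-- the sub-cycle cut off by a chord is a cycle embedding. -/
lemma subCycle {n : ℕ} {f : ZMod n → V} (hf : G.IsCycleEmb f) (p : ZMod n) {d : ℕ}
    (_hd2 : 2 ≤ d) (hdn : d + 1 < n) (hadj : G.Adj (f (p + (d : ZMod n))) (f p)) :
    G.IsCycleEmb (fun k : ZMod (d + 1) => f (p + (k.val : ZMod n))) := by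
  haveI : NeZero n := ⟨by omega⟩
  constructor
  · intro k₁ k₂ h
    have h2 : p + (k₁.val : ZMod n) = p + (k₂.val : ZMod n) := hf.1 h
    have h3 : (k₁.val : ZMod n) = (k₂.val : ZMod n) := add_left_cancel h2
    have h4 : k₁.val = k₂.val :=
      natCast_inj' (lt_trans (ZMod.val_lt k₁) hdn) (lt_trans (ZMod.val_lt k₂) hdn) h3
    exact ZMod.val_injective _ h4
  · intro k
    by_cases hkd : k.val = d
    · have hk1 : k + 1 = 0 := by
        have hkk : k = (d : ZMod (d + 1)) := by
          apply ZMod.val_injective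
          rw [hkd, ZMod.val_cast_of_lt (by omega)]
        rw [hkk]
        have hns := ZMod.natCast_self (d + 1)
        push_cast at hns
        exact hns
      simp only [hk1, hkd, ZMod.val_zero, Nat.cast_zero, add_zero]
      exact hadj
    · have hk : k.val < d := lt_of_le_of_ne (by have := ZMod.val_lt k; omega) hkd
      have : (k + 1).val = k.val + 1 := val_succ (by omega)
      simp only [this]
      have he : p + ((k.val + 1 : ℕ) : ZMod n) = (p + (k.val : ZMod n)) + 1 := by
        push_cast; ring
      rw [he]
      exact hf.2 _

lemma shift_ne {n : ℕ} (p : ZMod n) {a b : ℕ} (ha : a < n) (hb : b < n) (hab : a ≠ b) :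
    p + (a : ZMod n) ≠ p + (b : ZMod n) :=
  fun h => hab (natCast_inj' ha hb (add_left_cancel h))

end TwoChordAux

section TwoChordProof

variable {V : Type*} {G : SimpleGraph V}

lemma isChordOf_def {n : ℕ} {f : ZMod n → V} {i j : ZMod n} :
    G.IsChordOf f i j ↔ G.Adj (f i) (f j) ∧ j ≠ i + 1 ∧ i ≠ j + 1 := Iff.rfl

/-- Build a 2-chord triangle from explicit shifted data. -/
lemma mk_two_chord {n : ℕ} [NeZero n] {f : ZMod n → V} (p : ZMod n) (a b : ℕ)
    (ha2 : a + 2 < n) (hb1 : b + 1 < n)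
    (hadj1 : G.Adj (f (p + (b : ZMod n))) (f (p + (a : ZMod n))))
    (hadj2 : G.Adj (f (p + (b : ZMod n))) (f (p + ((a + 1 : ℕ) : ZMod n))))
    (h1 : a ≠ b + 1) (h2 : b ≠ a + 1) (h3 : b ≠ a + 2) (hab : a ≠ b) :
    ∃ i j : ZMod n, G.IsChordOf f j i ∧ G.IsChordOf f j (i + 1) := by
  have eq_a : (p + (a : ZMod n)) + 1 = p + ((a + 1 : ℕ) : ZMod n) := by push_cast; ring
  have eq_b : (p + (b : ZMod n)) + 1 = p + ((b + 1 : ℕ) : ZMod n) := by push_cast; ring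
  have eq_a1 : (p + ((a + 1 : ℕ) : ZMod n)) + 1 = p + ((a + 2 : ℕ) : ZMod n) := by
    push_cast; ring
  refine ⟨p + (a : ZMod n), p + (b : ZMod n), ⟨hadj1, ?_, ?_⟩, ?_, ?_, ?_⟩
  · rw [eq_b]; exact TwoChordAux.shift_ne p (by omega) (by omega) h1
  · rw [eq_a]; exact TwoChordAux.shift_ne p (by omega) (by omega) h2
  · rw [eq_a]; exact hadj2
  · rw [eq_a, eq_b]; exact TwoChordAux.shift_ne p (by omega) (by omega) (by omega)
  · rw [eq_a, eq_a1]; exact TwoChordAux.shift_ne p (by omega) (by omega) h3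

end TwoChordProof

/-- A finite simple graph is strongly chordal iff it has no chordless cycle on four
vertices and every cycle on at least five vertices has an induced 2-chord triangle:
a triangle formed by one edge `{f i, f (i+1)}` of the cycle together with two chords
from a third vertex `f j` of the cycle. -/
theorem stronglyChordal_iff_two_chord_triangle {V : Type*} [Fintype V] (G : SimpleGraph V) :
    G.StronglyChordal ↔
      (∀ f : ZMod 4 → V, G.IsCycleEmb f → ∃ i j, G.IsChordOf f i j) ∧
      (∀ (n : ℕ), 5 ≤ n → ∀ f : ZMod n → V, G.IsCycleEmb f →
        ∃ i j : ZMod n, G.IsChordOf f j i ∧ G.IsChordOf f j (i + 1)) := by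
  constructor
  · rintro ⟨hch, hsc⟩
    refine ⟨fun f hf => hch 4 (by norm_num) f hf, ?_⟩
    intro n
    induction n using Nat.strong_induction_on with
    | _ n IHP =>
      intro hn f hf
      haveI : NeZero n := ⟨by omega⟩
      -- Key lemma R: any chord at odd distance d yields a 2-chord triangle.
      have R : ∀ d : ℕ, Odd d → 3 ≤ d → d ≤ n - 2 → ∀ p : ZMod n,
          G.Adj (f p) (f (p + (d : ZMod n))) →
          ∃ i j : ZMod n, G.IsChordOf f j i ∧ G.IsChordOf f j (i + 1) := by
        intro d
        induction d using Nat.strong_induction_on with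
        | _ d IHd =>
          intro hdodd hd3 hdn2 p hadj
          have hcyc : G.IsCycleEmb (fun k : ZMod (d + 1) => f (p + (k.val : ZMod n))) :=
            TwoChordAux.subCycle hf p (by omega) (by omega) hadj.symm
          rcases eq_or_lt_of_le hd3 with hd3' | hd5
          · -- base case d = 3
            subst hd3'
            obtain ⟨u, v, huv⟩ := hch (3 + 1) (by norm_num) _ hcyc
            have hne : u ≠ v := fun h => huv.1.ne (by rw [h])
            have key : ∀ u v : ZMod (3 + 1), v ≠ u + 1 → u ≠ v + 1 → u ≠ v →
                ((u.val = 0 ∧ v.val = 2) ∨ (u.val = 2 ∧ v.val = 0) ∨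
                 (u.val = 1 ∧ v.val = 3) ∨ (u.val = 3 ∧ v.val = 1)) := by decide
            have hvals := key u v huv.2.1 huv.2.2 hne
            have hT : G.IsChordOf f (p + (u.val : ZMod n)) (p + (v.val : ZMod n)) :=
              TwoChordAux.chord_transfer (by omega) p huv
            rcases hvals with ⟨h0, h2⟩ | ⟨h0, h2⟩ | ⟨h0, h2⟩ | ⟨h0, h2⟩ <;> rw [h0, h2] at hT
            · exact mk_two_chord p 2 0 (by omega) (by omega) hT.1
                (by simpa using hadj) (by omega) (by omega) (by omega) (by omega)
            · exact mk_two_chord p 2 0 (by omega) (by omega) hT.1.symm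
                (by simpa using hadj) (by omega) (by omega) (by omega) (by omega)
            · exact mk_two_chord p 0 3 (by omega) (by omega) (by simpa using hadj.symm)
                (by simpa using hT.1.symm) (by omega) (by omega) (by omega) (by omega)
            · exact mk_two_chord p 0 3 (by omega) (by omega) (by simpa using hadj.symm)
                (by simpa using hT.1) (by omega) (by omega) (by omega) (by omega)
          · -- step case d ≥ 5
            have hd5' : 5 ≤ d := by have := Nat.odd_iff.mp hdodd; omega
            obtain ⟨i', j', hc1, hc2⟩ := IHP (d + 1) (by omega) (by omega) _ hcyc
            by_cases hiv : i'.val = d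
            · -- the distinguished edge of the subcycle is the chord itself
              have hi0 : i' + 1 = 0 := by
                have hkk : i' = (d : ZMod (d + 1)) := by
                  apply ZMod.val_injective
                  rw [hiv, ZMod.val_cast_of_lt (by omega)]
                rw [hkk]
                have hns := ZMod.natCast_self (d + 1)
                push_cast at hns
                exact hns
              rw [hi0] at hc2
              have hjlt : j'.val < d + 1 := ZMod.val_lt j'
              have he0 : j'.val ≠ 0 := by
                intro h
                exact hc1.2.2 (by rw [hi0]; exact (ZMod.val_eq_zero j').mp h)
              have he1 : j'.val ≠ 1 := by
                intro h
                apply hc2.2.2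
                have hj1 : j' = (1 : ZMod (d + 1)) := by
                  apply ZMod.val_injective
                  rw [h]
                  haveI : Fact (1 < d + 1) := ⟨by omega⟩
                  rw [ZMod.val_one]
                rw [zero_add]
                exact hj1
              have hed : j'.val ≠ d := by
                intro h
                apply hc2.2.1
                have hj1 : j' = (d : ZMod (d + 1)) := by
                  apply ZMod.val_injective
                  rw [h, ZMod.val_cast_of_lt (by omega)]
                rw [hj1]
                have hns := ZMod.natCast_self (d + 1)
                push_cast at hns
                exact hns.symm
              have hed1 : j'.val ≠ d - 1 := by
                intro h
                apply hc1.2.1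
                apply ZMod.val_injective
                rw [hiv, TwoChordAux.val_succ (by omega : j'.val + 1 < d + 1), h]
                omega
              have hTA := TwoChordAux.chord_transfer (show d + 1 < n by omega) p hc1
              have hTB := TwoChordAux.chord_transfer (show d + 1 < n by omega) p hc2
              rw [hiv] at hTA
              simp only [ZMod.val_zero, Nat.cast_zero, add_zero] at hTB
              rcases Nat.even_or_odd j'.val with heE | heO
              · have hodd' : Odd (d - j'.val) := Nat.Odd.sub_even (by omega) hdodd heE
                have h3' : 3 ≤ d - j'.val := by have := Nat.odd_iff.mp hodd'; omega
                apply IHd (d - j'.val) (by omega) hodd' h3' (by omega) (p + (j'.val : ZMod n))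
                have hsum : (p + ((j'.val : ℕ) : ZMod n)) + (((d - j'.val : ℕ)) : ZMod n)
                    = p + ((d : ℕ) : ZMod n) := by
                  rw [Nat.cast_sub (by omega : j'.val ≤ d)]
                  ring
                rw [hsum]
                exact hTA.1
              · have h3' : 3 ≤ j'.val := by have := Nat.odd_iff.mp heO; omega
                apply IHd j'.val (by omega) heO h3' (by omega) p
                exact hTB.1.symm
            · -- the edge of the subcycle is an honest edge of the big cycle
              have hilt : i'.val < d := by have := ZMod.val_lt i'; omega
              have hi1 : (i' + 1).val = i'.val + 1 := TwoChordAux.val_succ (by omega)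
              have hT1 := TwoChordAux.chord_transfer (show d + 1 < n by omega) p hc1
              have hT2 := TwoChordAux.chord_transfer (show d + 1 < n by omega) p hc2
              rw [hi1] at hT2
              have he : p + ((i'.val + 1 : ℕ) : ZMod n) = (p + ((i'.val : ℕ) : ZMod n)) + 1 := by
                push_cast; ring
              rw [he] at hT2
              exact ⟨p + (i'.val : ZMod n), p + (j'.val : ZMod n), hT1, hT2⟩
      -- produce an odd-distance chord
      rcases Nat.even_or_odd n with hnE | hnO
      · -- n even, use the strong chord hypothesis
        have h6 : 6 ≤ n := by rcases hnE with ⟨k, hk⟩; omega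
        obtain ⟨i, j, hsij⟩ := hsc n h6 hnE f hf
        obtain ⟨⟨hadj, hne1, hne2⟩, hodd⟩ := hsij
        have hij : i ≠ j := fun h => hadj.ne (congrArg f h)
        have hd0 : (j - i).val ≠ 0 := by
          intro h
          exact hij (sub_eq_zero.mp ((ZMod.val_eq_zero _).mp h)).symm
        have hd1 : (j - i).val ≠ 1 := by
          intro h
          apply hne1
          have : j - i = ((1 : ℕ) : ZMod n) := by
            rw [← h, ZMod.natCast_rightInverse (j - i)]
          rw [Nat.cast_one] at this
          rw [← sub_add_cancel j i, this]; ring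
        have hdn1 : (j - i).val ≠ n - 1 := by
          intro h
          apply hne2
          have : j - i = ((n - 1 : ℕ) : ZMod n) := by
            rw [← h, ZMod.natCast_rightInverse (j - i)]
          have h2 : ((n - 1 : ℕ) : ZMod n) = -1 := by
            push_cast [Nat.cast_sub (by omega : 1 ≤ n)]
            simp
          rw [h2] at this
          have : i = j + 1 := by
            have := sub_eq_iff_eq_add.mp this
            rw [this]; ring
          exact this
        have hdlt : (j - i).val < n := ZMod.val_lt _
        have h3 : 3 ≤ (j - i).val := by
          have := Nat.odd_iff.mp hodd; omega
        apply R (j - i).val hodd h3 (by omega) i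
        have : i + (((j - i).val : ℕ) : ZMod n) = j := by
          rw [ZMod.natCast_rightInverse (j - i)]; ring
        rw [this]; exact hadj
      · -- n odd, use chordality
        obtain ⟨i, j, hcij⟩ := hch n (by omega) f hf
        obtain ⟨hadj, hne1, hne2⟩ := hcij
        have hij : i ≠ j := fun h => hadj.ne (congrArg f h)
        have hd0 : (j - i).val ≠ 0 := by
          intro h
          exact hij (sub_eq_zero.mp ((ZMod.val_eq_zero _).mp h)).symm
        have hd1 : (j - i).val ≠ 1 := by
          intro h
          apply hne1
          have : j - i = ((1 : ℕ) : ZMod n) := by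
            rw [← h, ZMod.natCast_rightInverse (j - i)]
          rw [Nat.cast_one] at this
          rw [← sub_add_cancel j i, this]; ring
        have hdn1 : (j - i).val ≠ n - 1 := by
          intro h
          apply hne2
          have : j - i = ((n - 1 : ℕ) : ZMod n) := by
            rw [← h, ZMod.natCast_rightInverse (j - i)]
          have h2 : ((n - 1 : ℕ) : ZMod n) = -1 := by
            push_cast [Nat.cast_sub (by omega : 1 ≤ n)]
            simp
          rw [h2] at this
          have := sub_eq_iff_eq_add.mp this
          rw [this]; ring
        have hdlt : (j - i).val < n := ZMod.val_lt _
        have hji : ((i - j).val : ℕ) = n - (j - i).val := by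
          haveI : NeZero (j - i) := ⟨sub_ne_zero.mpr (fun h => hij h.symm)⟩
          rw [show i - j = -(j - i) by ring, ZMod.val_neg_of_ne_zero]
        rcases Nat.even_or_odd (j - i).val with hdE | hdO
        · -- use the reversed chord
          have hoddn : Odd (n - (j - i).val) := Nat.Odd.sub_even (le_of_lt hdlt) hnO hdE
          have h3 : 3 ≤ n - (j - i).val := by
            have := Nat.odd_iff.mp hoddn; omega
          apply R (n - (j - i).val) hoddn h3 (by omega) j
          have : j + (((n - (j - i).val : ℕ)) : ZMod n) = i := by
            rw [← hji, ZMod.natCast_rightInverse (i - j)]; ring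
          rw [this]; exact hadj.symm
        · have h3 : 3 ≤ (j - i).val := by
            have := Nat.odd_iff.mp hdO; omega
          apply R (j - i).val hdO h3 (by omega) i
          have : i + (((j - i).val : ℕ) : ZMod n) = j := by
            rw [ZMod.natCast_rightInverse (j - i)]; ring
          rw [this]; exact hadj
  · rintro ⟨h4, h5⟩
    constructor
    · intro n hn f hf
      rcases eq_or_lt_of_le hn with h | h
      · subst h
        exact h4 f hf
      · obtain ⟨i, j, hc1, _⟩ := h5 n (by omega) f hf
        exact ⟨j, i, hc1⟩
    · intro n h6 hnE f hf
      haveI : NeZero n := ⟨by omega⟩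
      obtain ⟨i, j, hc1, hc2⟩ := h5 n (by omega) f hf
      obtain ⟨hadj1, hne1, hne2⟩ := hc1
      have hji : j ≠ i := fun h => hadj1.ne (congrArg f h)
      have hd0 : (i - j).val ≠ 0 := by
        intro h
        exact hji (sub_eq_zero.mp ((ZMod.val_eq_zero _).mp h)).symm
      have hdn1 : (i - j).val ≠ n - 1 := by
        intro h
        apply hne2
        have : i - j = ((n - 1 : ℕ) : ZMod n) := by
          rw [← h, ZMod.natCast_rightInverse (i - j)]
        have h2 : ((n - 1 : ℕ) : ZMod n) = -1 := by
          push_cast [Nat.cast_sub (by omega : 1 ≤ n)]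
          simp
        rw [h2] at this
        have := sub_eq_iff_eq_add.mp this
        rw [this]; ring
      have hdlt : (i - j).val < n := ZMod.val_lt _
      have hsucc : (i + 1 - j).val = (i - j).val + 1 := by
        rw [show i + 1 - j = (i - j) + 1 by ring]
        exact TwoChordAux.val_succ (by omega)
      rcases Nat.even_or_odd (i - j).val with hE | hO
      · refine ⟨j, i + 1, hc2, ?_⟩
        rw [hsucc]
        exact Even.add_one hE
      · exact ⟨j, i, ⟨hadj1, hne1, hne2⟩, hO⟩
end

section
/- A finite simple graph G is strongly chordal if and only if its clique matrix C(G) is totally balanced. -/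
open scoped Classical

/-- A 0-1 matrix is totally balanced if it has no `k × k` submatrix (`k ≥ 3`),
with no two identical columns, in which every row sum and every column sum
equals 2 (the edge-vertex incidence matrix of a cycle of length at least 3). -/
def TotallyBalanced {α β : Type*} [Fintype α] [Fintype β] (M : Matrix α β ℕ) : Prop :=
  ¬ ∃ (k : ℕ), 3 ≤ k ∧ ∃ (r : Fin k → α) (c : Fin k → β),
      Function.Injective r ∧ Function.Injective c ∧
      (∀ j j' : Fin k, (∀ i : Fin k, M (r i) (c j) = M (r i) (c j')) → j = j') ∧
      (∀ i : Fin k, ∑ j : Fin k, M (r i) (c j) = 2) ∧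
      (∀ j : Fin k, ∑ i : Fin k, M (r i) (c j) = 2)

/-- The neighborhood matrix `M(G)` of `G` with respect to the vertex ordering `σ`:
the `(i, j)` entry is 1 if `σ i ∈ N[σ j]` and 0 otherwise. -/
noncomputable def SimpleGraph.nbhdMatrix {V : Type*} [Fintype V] (G : SimpleGraph V)
    (σ : Fin (Fintype.card V) ≃ V) :
    Matrix (Fin (Fintype.card V)) (Fin (Fintype.card V)) ℕ :=
  fun i j => if σ i ∈ G.closedNbhd (σ j) then 1 else 0

/-- A maximal clique of `G`: a clique contained in no strictly larger clique. -/
def SimpleGraph.IsMaxClique {V : Type*} (G : SimpleGraph V) (S : Set V) : Prop :=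
  G.IsClique S ∧ ∀ T : Set V, G.IsClique T → S ⊆ T → S = T

/-- The clique matrix `C(G)` of `G`: rows indexed by vertices, columns by maximal
cliques, with `(v, K)` entry 1 if `v ∈ K` and 0 otherwise. -/
noncomputable def SimpleGraph.cliqueMatrix {V : Type*} (G : SimpleGraph V) :
    Matrix V {S : Set V // G.IsMaxClique S} ℕ :=
  fun v K => if v ∈ K.1 then 1 else 0


namespace Farber

open Function

variable {V : Type*} {G : SimpleGraph V}

section ZModFacts

lemma zmod_one_ne_zero {m : ℕ} (hm : 3 ≤ m) : (1 : ZMod m) ≠ 0 := by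
  intro h0
  have h1 : ((1 : ℕ) : ZMod m) = 0 := by exact_mod_cast h0
  have := (ZMod.natCast_eq_zero_iff 1 m).mp h1
  have := Nat.le_of_dvd (by norm_num) this
  omega

lemma zmod_two_ne_zero {m : ℕ} (hm : 3 ≤ m) : (2 : ZMod m) ≠ 0 := by
  intro h0
  have h1 : ((2 : ℕ) : ZMod m) = 0 := by exact_mod_cast h0
  have := (ZMod.natCast_eq_zero_iff 2 m).mp h1
  have := Nat.le_of_dvd (by norm_num) this
  omega

lemma zmod_ne_add_one {m : ℕ} (hm : 3 ≤ m) (i : ZMod m) : i ≠ i + 1 := by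
  intro h
  have : (1 : ZMod m) = 0 := by
    have := congrArg (fun x => x - i) h
    simpa [sub_eq_iff_eq_add] using this.symm
  exact zmod_one_ne_zero hm this

lemma zmod_ne_add_two {m : ℕ} (hm : 3 ≤ m) (i : ZMod m) : i ≠ i + 2 := by
  intro h
  have : (2 : ZMod m) = 0 := by
    have := congrArg (fun x => x - i) h
    simpa [sub_eq_iff_eq_add] using this.symm
  exact zmod_two_ne_zero hm this

end ZModFacts

section Cliques

/-- every clique extends to a maximal clique (finite graphs) -/
lemma exists_maxclique_ext [Fintype V] {s : Set V} (hs : G.IsClique s) :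
    ∃ K : Set V, G.IsMaxClique K ∧ s ⊆ K := by
  classical
  let 𝒮 : Finset (Finset V) :=
    Finset.univ.filter (fun t : Finset V => G.IsClique (t : Set V) ∧ s ⊆ (t : Set V))
  have hne : 𝒮.Nonempty := by
    refine ⟨s.toFinset, ?_⟩
    simp only [𝒮, Finset.mem_filter, Finset.mem_univ, true_and, Set.coe_toFinset]
    exact ⟨hs, le_rfl⟩
  obtain ⟨m, hm, hmax⟩ := Finset.exists_maximal hne
  simp only [𝒮, Finset.mem_filter, Finset.mem_univ, true_and] at hm
  refine ⟨(m : Set V), ⟨hm.1, ?_⟩, hm.2⟩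
  intro T hT hsub
  have hTfin : T.toFinset ∈ 𝒮 := by
    simp only [𝒮, Finset.mem_filter, Finset.mem_univ, true_and, Set.coe_toFinset]
    exact ⟨hT, hm.2.trans (by simpa using hsub)⟩
  have h1 : m ⊆ T.toFinset := by
    intro x hx; simp only [Set.mem_toFinset]; exact hsub hx
  have heq : m = T.toFinset := by
    by_contra hne'
    exact hne' (le_antisymm h1 (hmax hTfin h1))
  rw [heq]; simp

/-- a vertex adjacent-or-equal to everything in a maximal clique belongs to it -/
lemma mem_maxclique_of_adj {K : Set V} (hK : G.IsMaxClique K) {y : V}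
    (h : ∀ z ∈ K, z = y ∨ G.Adj z y) : y ∈ K := by
  have hclique : G.IsClique (insert y K) := by
    intro a ha b hb hab
    rcases ha with rfl | ha
    · rcases hb with rfl | hb
      · exact absurd rfl hab
      · rcases h b hb with rfl | hadj
        · exact absurd rfl hab
        · exact hadj.symm
    · rcases hb with rfl | hb
      · rcases h a ha with rfl | hadj
        · exact absurd rfl hab
        · exact hadj
      · exact hK.1 ha hb hab
  have := hK.2 _ hclique (Set.subset_insert _ _)
  rw [this]; exact Set.mem_insert _ _

end Cliques

/-- A "cycle configuration" in the clique matrix: the combinatorial core of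
non-total-balancedness. -/
def HasConfig (G : SimpleGraph V) : Prop :=
  ∃ (m : ℕ), 3 ≤ m ∧ ∃ (v : ZMod m → V) (K : ZMod m → Set V),
    Function.Injective v ∧ (∀ j, G.IsMaxClique (K j)) ∧
    ∀ i j, v i ∈ K j ↔ (j = i ∨ j + 1 = i)

section L1

variable [Fintype V]

lemma config_not_tb (h : HasConfig G) : ¬ TotallyBalanced G.cliqueMatrix := by
  classical
  obtain ⟨m, hm3, v, K, hv, hK, hmem⟩ := h
  haveI : NeZero m := ⟨by omega⟩
  have hcv : ∀ z : ZMod m, ((z.val : ℕ) : ZMod m) = z := fun z =>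
    ZMod.natCast_rightInverse z
  set e : Fin m → ZMod m := fun t => ((t : ℕ) : ZMod m) with he
  have heinj : Function.Injective e := by
    intro a b hab
    have ha : (e a).val = (a : ℕ) := ZMod.val_cast_of_lt a.2
    have hb : (e b).val = (b : ℕ) := ZMod.val_cast_of_lt b.2
    have : (a : ℕ) = (b : ℕ) := by rw [← ha, ← hb, hab]
    exact Fin.ext this
  have hesurj : Function.Surjective e := by
    intro z
    exact ⟨⟨z.val, ZMod.val_lt z⟩, hcv z⟩
  have hebij : Function.Bijective e := ⟨heinj, hesurj⟩
  -- the filter sets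
  have hfilt_row : ∀ i : ZMod m,
      Finset.univ.filter (fun z : ZMod m => v i ∈ K z) = {i, i - 1} := by
    intro i
    ext z
    simp only [Finset.mem_filter, Finset.mem_univ, true_and, Finset.mem_insert,
      Finset.mem_singleton, hmem]
    constructor
    · rintro (rfl | hz)
      · exact Or.inl rfl
      · right; rw [eq_sub_iff_add_eq]; exact hz
    · rintro (rfl | rfl)
      · exact Or.inl rfl
      · right; rw [sub_add_cancel]
  have hfilt_col : ∀ j : ZMod m,
      Finset.univ.filter (fun z : ZMod m => v z ∈ K j) = {j, j + 1} := by
    intro j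
    ext z
    simp only [Finset.mem_filter, Finset.mem_univ, true_and, Finset.mem_insert,
      Finset.mem_singleton, hmem]
    constructor
    · rintro (rfl | rfl)
      · exact Or.inl rfl
      · exact Or.inr rfl
    · rintro (rfl | rfl)
      · exact Or.inl rfl
      · exact Or.inr rfl
  have hii1 : ∀ i : ZMod m, i ≠ i - 1 := by
    intro i h
    have : i - (i - 1) = 0 := by rw [← h]; exact sub_self i
    rw [sub_sub_cancel] at this
    exact zmod_one_ne_zero hm3 this
  -- key: pattern determines column
  have hpat : ∀ j j' : ZMod m, (∀ z : ZMod m, (v z ∈ K j ↔ v z ∈ K j')) → j = j' := by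
    intro j j' hp
    have h1 : v j ∈ K j := (hmem j j).mpr (Or.inl rfl)
    have h2 : v (j + 1) ∈ K j := (hmem (j+1) j).mpr (Or.inr rfl)
    have h1' := (hmem j j').mp ((hp j).mp h1)
    have h2' := (hmem (j+1) j').mp ((hp (j+1)).mp h2)
    rcases h1' with h1' | h1'
    · exact h1'.symm
    · rcases h2' with h2' | h2'
      · exfalso
        apply zmod_ne_add_two hm3 j'
        calc j' = j + 1 := h2'
          _ = (j' + 1) + 1 := by rw [h1']
          _ = j' + 2 := by ring
      · exact (add_right_cancel h2').symm
  intro htb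
  apply htb
  refine ⟨m, hm3, fun t => v (e t), fun t => ⟨K (e t), hK _⟩, hv.comp heinj, ?_, ?_, ?_, ?_⟩
  · -- injectivity of columns
    intro a b hab
    have : K (e a) = K (e b) := congrArg Subtype.val hab
    apply heinj
    apply hpat
    intro z
    rw [this]
  · -- pattern distinctness
    intro j j' hp
    apply heinj
    apply hpat
    intro z
    have := hp ⟨z.val, ZMod.val_lt z⟩
    simp only [SimpleGraph.cliqueMatrix] at this
    simp only [he, Fin.val_mk] at this
    rw [hcv z] at this
    change (if v z ∈ K (e j) then 1 else 0) = (if v z ∈ K (e j') then 1 else 0) at this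
    by_cases h1 : v z ∈ K (e j) <;> by_cases h2 : v z ∈ K (e j') <;>
      simp [h1, h2] at this ⊢
  · -- row sums
    intro i
    have : ∀ t : Fin m, G.cliqueMatrix (v (e i))
        ((fun t => (⟨K (e t), hK _⟩ : {S : Set V // G.IsMaxClique S})) t)
        = if v (e i) ∈ K (e t) then 1 else 0 := fun t => rfl
    rw [Finset.sum_congr rfl (fun t _ => this t)]
    rw [Fintype.sum_bijective e hebij _ (fun z => if v (e i) ∈ K z then 1 else 0)
      (fun t => rfl)]
    rw [Finset.sum_boole, hfilt_row]
    rw [Finset.card_insert_of_notMem (by simp [hii1 (e i)]), Finset.card_singleton]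
    norm_num
  · -- column sums
    intro j
    have : ∀ t : Fin m, G.cliqueMatrix (v (e t))
        ((fun t => (⟨K (e t), hK _⟩ : {S : Set V // G.IsMaxClique S})) j)
        = if v (e t) ∈ K (e j) then 1 else 0 := fun t => rfl
    rw [Finset.sum_congr rfl (fun t _ => this t)]
    rw [Fintype.sum_bijective e hebij _ (fun z => if v z ∈ K (e j) then 1 else 0)
      (fun t => rfl)]
    rw [Finset.sum_boole, hfilt_col]
    have : e j ∉ ({e j + 1} : Finset (ZMod m)) := by
      simp only [Finset.mem_singleton]
      exact zmod_ne_add_one hm3 (e j)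
    rw [Finset.card_insert_of_notMem this, Finset.card_singleton]
    norm_num

end L1

end Farber

namespace Farber

variable {V : Type*} {G : SimpleGraph V}

lemma zmod_three_ne_zero {m : ℕ} (hm : 4 ≤ m) : (3 : ZMod m) ≠ 0 := by
  intro h0
  have h1 : ((3 : ℕ) : ZMod m) = 0 := by exact_mod_cast h0
  have := (ZMod.natCast_eq_zero_iff 3 m).mp h1
  have := Nat.le_of_dvd (by norm_num) this
  omega

lemma zmod_ne_add_three {m : ℕ} (hm : 4 ≤ m) (i : ZMod m) : i ≠ i + 3 := by
  intro h
  have : (3 : ZMod m) = 0 := by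
    have := congrArg (fun x => x - i) h
    simpa [sub_eq_iff_eq_add] using this.symm
  exact zmod_three_ne_zero hm this

lemma pair_clique {a b : V} (h : G.Adj a b) : G.IsClique {a, b} := by
  intro x hx y hy hxy
  rcases hx with rfl | hx <;> rcases hy with rfl | hy
  · exact absurd rfl hxy
  · rcases hy with rfl; exact h
  · rcases hx with rfl; exact h.symm
  · rcases hx with rfl; rcases hy with rfl; exact absurd rfl hxy

lemma not_chordal_config [Fintype V] (h : ¬ G.Chordal) : HasConfig G := by
  classical
  simp only [SimpleGraph.Chordal] at h
  push_neg at h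
  obtain ⟨n, hn4, f, hcyc, hnochord⟩ := h
  have hn3 : 3 ≤ n := by omega
  obtain ⟨hinj, hadj⟩ := hcyc
  choose K hKmax hKsub using
    fun i : ZMod n => exists_maxclique_ext (G := G) (pair_clique (hadj i))
  refine ⟨n, hn3, f, K, hinj, hKmax, ?_⟩
  intro a i
  constructor
  · intro hmem
    by_contra hcon
    push_neg at hcon
    obtain ⟨hia, hi1a⟩ := hcon
    -- f i ∈ K i, f a ∈ K i, f i ≠ f a
    have hfi : f i ∈ K i := hKsub i (Set.mem_insert _ _)
    have hfi1 : f (i+1) ∈ K i := hKsub i (Set.mem_insert_of_mem _ rfl)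
    have hne1 : f i ≠ f a := fun hh => hia (hinj hh)
    have hadj1 : G.Adj (f i) (f a) := (hKmax i).1 hfi hmem hne1
    have hieq : i = a + 1 := by
      by_contra hne
      exact hnochord i a ⟨hadj1, fun hh => hi1a hh.symm, hne⟩
    -- then f a and f (i+1) = f (a+2) adjacent: chord (a, a+2)
    have ha2 : i + 1 = a + 2 := by rw [hieq]; ring
    have hne2 : f a ≠ f (a + 2) := fun hh => zmod_ne_add_two hn3 a (hinj hh)
    have hadj2 : G.Adj (f a) (f (a + 2)) := by
      have := (hKmax i).1 hmem (ha2 ▸ hfi1) hne2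
      exact this
    refine hnochord a (a + 2) ⟨hadj2, ?_, ?_⟩
    · intro hh
      exact zmod_one_ne_zero hn3 (by linear_combination hh)
    · intro hh
      exact zmod_ne_add_three hn4 a (by linear_combination hh)
  · intro hh
    rcases hh with hh | hh
    · rw [← hh]; exact hKsub i (Set.mem_insert _ _)
    · rw [← hh]; exact hKsub i (Set.mem_insert_of_mem _ rfl)

end Farber

namespace Farber

variable {V : Type*} {G : SimpleGraph V}

lemma zmod_cast_val {n : ℕ} [NeZero n] (z : ZMod n) : ((z.val : ℕ) : ZMod n) = z :=
  ZMod.natCast_rightInverse z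

lemma zmod_val_one' {n : ℕ} (hn : 2 ≤ n) : (1 : ZMod n).val = 1 := by
  haveI : NeZero n := ⟨by omega⟩
  have : ((1 : ℕ) : ZMod n) = (1 : ZMod n) := by push_cast; rfl
  rw [← this, ZMod.val_cast_of_lt (by omega)]

/-- In a chordal graph, every edge of a cycle has a common neighbour among the
other vertices of the cycle. -/
lemma edge_cone (hch : G.Chordal) :
    ∀ n : ℕ, 3 ≤ n → ∀ f : ZMod n → V, G.IsCycleEmb f → ∀ p : ZMod n,
      ∃ z ∈ Set.range f, z ≠ f p ∧ z ≠ f (p+1) ∧ G.Adj z (f p) ∧ G.Adj z (f (p+1)) := by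
  intro n
  induction n using Nat.strong_induction_on with
  | _ n ih =>
    intro hn3 f hcyc p
    obtain ⟨hinj, hadj⟩ := hcyc
    haveI : NeZero n := ⟨by omega⟩
    by_cases hn4 : n < 4
    · -- base case n = 3
      obtain rfl : n = 3 := by omega
      have h30 : (3 : ZMod 3) = 0 := by decide
      have hp3 : p + 2 + 1 = p := by linear_combination h30
      refine ⟨f (p + 2), ⟨p + 2, rfl⟩, ?_, ?_, ?_, ?_⟩
      · intro hh
        exact zmod_ne_add_two (by norm_num) p (hinj hh).symm
      · intro hh
        have := hinj hh
        exact zmod_one_ne_zero (m := 3) (by norm_num) (by linear_combination this)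
      · have := hadj (p + 2)
        rw [hp3] at this
        exact this
      · have h := (hadj (p + 1)).symm
        have e2 : p + 1 + 1 = p + 2 := by ring
        rw [e2] at h
        exact h
    · -- n ≥ 4 : use a chord
      have hn4' : 4 ≤ n := by omega
      obtain ⟨i, j, hadj_ij, hji, hij⟩ := hch n hn4' f ⟨hinj, hadj⟩
      set d := (j - i).val with hd_def
      have hcast_d : ((d : ℕ) : ZMod n) = j - i := zmod_cast_val _
      have hd_lt : d < n := ZMod.val_lt _
      have hd0 : d ≠ 0 := by
        intro h0
        have hji0 : j - i = 0 := by rw [← hcast_d, h0]; simp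
        have hje : j = i := by linear_combination hji0
        exact hadj_ij.ne (congrArg f hje.symm)
      have hd1 : d ≠ 1 := by
        intro h1
        apply hji
        have : j - i = 1 := by rw [← hcast_d, h1]; push_cast; rfl
        linear_combination this
      have hdn1 : d ≠ n - 1 := by
        intro hdn
        apply hij
        have hcn : ((n : ℕ) : ZMod n) = 0 := ZMod.natCast_self n
        have : j - i = ((n - 1 : ℕ) : ZMod n) := by rw [← hcast_d, hdn]
        rw [Nat.cast_sub (by omega)] at this
        push_cast at this
        rw [hcn] at this
        linear_combination -this
      have hd2 : 2 ≤ d := by omega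
      have hdn2 : d ≤ n - 2 := by omega
      set e := (p - i).val with he_def
      have hcast_e : ((e : ℕ) : ZMod n) = p - i := zmod_cast_val _
      have he_lt : e < n := ZMod.val_lt _
      by_cases hcase : e < d
      · -- p on the arc from i to j
        set m' := d + 1 with hm'_def
        haveI : NeZero m' := ⟨by omega⟩
        have hm'3 : 3 ≤ m' := by omega
        have hm'n : m' < n := by omega
        set g : ZMod m' → V := fun t => f (i + ((t.val : ℕ) : ZMod n)) with hg_def
        have hval_lt : ∀ t : ZMod m', t.val < m' := fun t => ZMod.val_lt t
        have hginj : Function.Injective g := by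
          intro t₁ t₂ ht
          have := hinj ht
          have h2 : ((t₁.val : ℕ) : ZMod n) = ((t₂.val : ℕ) : ZMod n) := by
            have := congrArg (fun x => x - i) this
            simpa using this
          have h3 := congrArg ZMod.val h2
          rw [ZMod.val_cast_of_lt (lt_trans (hval_lt t₁) hm'n),
            ZMod.val_cast_of_lt (lt_trans (hval_lt t₂) hm'n)] at h3
          exact ZMod.val_injective m' h3
        have hgadj : ∀ t : ZMod m', G.Adj (g t) (g (t + 1)) := by
          intro t
          by_cases hlast : t.val = d
          · have ht : t = ((d : ℕ) : ZMod m') := by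
              rw [← zmod_cast_val t, hlast]
            have ht1 : t + 1 = 0 := by
              rw [ht]
              have : ((d + 1 : ℕ) : ZMod m') = 0 := by rw [← hm'_def]; exact ZMod.natCast_self m'
              push_cast at this ⊢
              linear_combination this
            have hgt : g t = f j := by
              rw [hg_def]
              simp only [hlast]
              rw [hcast_d]
              congr 1
              ring
            have hgt1 : g (t + 1) = f i := by
              rw [ht1, hg_def]
              simp [ZMod.val_zero]
            rw [hgt, hgt1]
            exact hadj_ij.symm
          · have hstep : (t + 1).val = t.val + 1 := by
              rw [ZMod.val_add, zmod_val_one' (by omega)]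
              exact Nat.mod_eq_of_lt (by have := hval_lt t; omega)
            rw [hg_def]
            simp only [hstep]
            have : f (i + ((t.val + 1 : ℕ) : ZMod n)) = f (i + ((t.val : ℕ) : ZMod n) + 1) := by
              congr 1
              push_cast
              ring
            rw [this]
            exact hadj _
        set q : ZMod m' := ((e : ℕ) : ZMod m') with hq_def
        have hqval : q.val = e := ZMod.val_cast_of_lt (by omega)
        have hgq : g q = f p := by
          rw [hg_def]
          simp only [hqval]
          rw [hcast_e]
          congr 1
          ring
        have hq1val : (q + 1).val = e + 1 := by
          rw [ZMod.val_add, hqval, zmod_val_one' (by omega)]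
          exact Nat.mod_eq_of_lt (by omega)
        have hgq1 : g (q + 1) = f (p + 1) := by
          rw [hg_def]
          simp only [hq1val]
          have : ((e + 1 : ℕ) : ZMod n) = (p - i) + 1 := by
            push_cast
            rw [hcast_e]
          rw [this]
          congr 1
          ring
        obtain ⟨z, hzr, hz1, hz2, hz3, hz4⟩ := ih m' hm'n hm'3 g ⟨hginj, hgadj⟩ q
        refine ⟨z, ?_, ?_, ?_, ?_, ?_⟩
        · obtain ⟨t, rfl⟩ := hzr
          exact ⟨_, rfl⟩
        · rw [← hgq]; exact hz1
        · rw [← hgq1]; exact hz2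
        · rw [← hgq]; exact hz3
        · rw [← hgq1]; exact hz4
      · -- p on the arc from j to i
        push_neg at hcase
        set m' := n - d + 1 with hm'_def
        haveI : NeZero m' := ⟨by omega⟩
        have hm'3 : 3 ≤ m' := by omega
        have hm'n : m' < n := by omega
        set g : ZMod m' → V := fun t => f (j + ((t.val : ℕ) : ZMod n)) with hg_def
        have hval_lt : ∀ t : ZMod m', t.val < m' := fun t => ZMod.val_lt t
        have hcast_nd : ((n - d : ℕ) : ZMod n) = i - j := by
          rw [Nat.cast_sub (by omega)]
          rw [ZMod.natCast_self, hcast_d]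
          ring
        have hginj : Function.Injective g := by
          intro t₁ t₂ ht
          have := hinj ht
          have h2 : ((t₁.val : ℕ) : ZMod n) = ((t₂.val : ℕ) : ZMod n) := by
            have := congrArg (fun x => x - j) this
            simpa using this
          have h3 := congrArg ZMod.val h2
          rw [ZMod.val_cast_of_lt (lt_trans (hval_lt t₁) hm'n),
            ZMod.val_cast_of_lt (lt_trans (hval_lt t₂) hm'n)] at h3
          exact ZMod.val_injective m' h3
        have hgadj : ∀ t : ZMod m', G.Adj (g t) (g (t + 1)) := by
          intro t
          by_cases hlast : t.val = n - d
          · have ht1 : t + 1 = 0 := by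
              rw [← zmod_cast_val t, hlast]
              have : ((m' : ℕ) : ZMod m') = 0 := ZMod.natCast_self m'
              rw [hm'_def] at this
              push_cast at this ⊢
              linear_combination this
            have hgt : g t = f i := by
              rw [hg_def]
              simp only [hlast]
              rw [hcast_nd]
              congr 1
              ring
            have hgt1 : g (t + 1) = f j := by
              rw [ht1, hg_def]
              simp [ZMod.val_zero]
            rw [hgt, hgt1]
            exact hadj_ij
          · have hstep : (t + 1).val = t.val + 1 := by
              rw [ZMod.val_add, zmod_val_one' (by omega)]
              exact Nat.mod_eq_of_lt (by have := hval_lt t; omega)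
            rw [hg_def]
            simp only [hstep]
            have : f (j + ((t.val + 1 : ℕ) : ZMod n)) = f (j + ((t.val : ℕ) : ZMod n) + 1) := by
              congr 1
              push_cast
              ring
            rw [this]
            exact hadj _
        have hcast_ed : ((e - d : ℕ) : ZMod n) = p - j := by
          rw [Nat.cast_sub hcase, hcast_e, hcast_d]
          ring
        set q : ZMod m' := ((e - d : ℕ) : ZMod m') with hq_def
        have hqval : q.val = e - d := ZMod.val_cast_of_lt (by omega)
        have hgq : g q = f p := by
          rw [hg_def]
          simp only [hqval]
          rw [hcast_ed]
          congr 1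
          ring
        have hq1val : (q + 1).val = (e - d) + 1 := by
          rw [ZMod.val_add, hqval, zmod_val_one' (by omega)]
          exact Nat.mod_eq_of_lt (by omega)
        have hgq1 : g (q + 1) = f (p + 1) := by
          rw [hg_def]
          simp only [hq1val]
          have : ((e - d + 1 : ℕ) : ZMod n) = (p - j) + 1 := by
            push_cast
            rw [Nat.cast_sub hcase, hcast_e, hcast_d]
            ring
          rw [this]
          congr 1
          ring
        obtain ⟨z, hzr, hz1, hz2, hz3, hz4⟩ := ih m' hm'n hm'3 g ⟨hginj, hgadj⟩ q
        refine ⟨z, ?_, ?_, ?_, ?_, ?_⟩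
        · obtain ⟨t, rfl⟩ := hzr
          exact ⟨_, rfl⟩
        · rw [← hgq]; exact hz1
        · rw [← hgq1]; exact hz2
        · rw [← hgq]; exact hz3
        · rw [← hgq1]; exact hz4

end Farber

namespace Farber

variable {V : Type*} {G : SimpleGraph V}

lemma cast_eq_cases {n : ℕ} (hn : 0 < n) {a b : ℕ} (ha : a < 2*n) (hb : b < 2*n)
    (h : (a : ZMod n) = b) : a = b ∨ a + n = b ∨ b + n = a := by
  haveI : NeZero n := ⟨by omega⟩
  have hmod : a % n = b % n := (ZMod.natCast_eq_natCast_iff a b n).mp h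
  have h1 := Nat.div_add_mod a n
  have h2 := Nat.div_add_mod b n
  have ha1 : a / n < 2 := (Nat.div_lt_iff_lt_mul hn).mpr (by omega)
  have hb1 : b / n < 2 := (Nat.div_lt_iff_lt_mul hn).mpr (by omega)
  have hra : a % n < n := Nat.mod_lt _ hn
  have hrb : b % n < n := Nat.mod_lt _ hn
  generalize hqa : a / n = qa at h1 ha1
  generalize hqb : b / n = qb at h2 hb1
  interval_cases qa <;> interval_cases qb <;> omega

lemma zmod_val_two' {n : ℕ} (hn : 3 ≤ n) : (2 : ZMod n).val = 2 := by
  haveI : NeZero n := ⟨by omega⟩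
  have : ((2 : ℕ) : ZMod n) = (2 : ZMod n) := by push_cast; rfl
  rw [← this, ZMod.val_cast_of_lt (by omega)]

/-- parity of val of differences, for even modulus -/
lemma zmod_par {n : ℕ} [NeZero n] (hev : Even n) (i j : ZMod n) :
    (j - i).val % 2 = (j.val + i.val) % 2 := by
  obtain ⟨k, hk⟩ := hev
  have h := ZMod.val_add (j - i) i
  rw [sub_add_cancel] at h
  have h2 := Nat.div_add_mod ((j - i).val + i.val) n
  rw [← h] at h2
  have hdvd : 2 ∣ n * (((j - i).val + i.val) / n) :=
    Dvd.dvd.mul_right ⟨k, by omega⟩ _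
  obtain ⟨t, ht⟩ := hdvd
  rw [ht] at h2
  omega

lemma zmod_conspar {n : ℕ} [NeZero n] (hn : 2 ≤ n) (hev : Even n) (i : ZMod n) :
    i.val % 2 ≠ (i + 1).val % 2 := by
  have h := zmod_par hev i (i + 1)
  have h1 : (i + 1) - i = 1 := by ring
  rw [h1, zmod_val_one' hn] at h
  omega

lemma triple_clique {a b c : V} (hab : G.Adj a b) (hac : G.Adj a c) (hbc : G.Adj b c) :
    G.IsClique {a, b, c} := by
  intro x hx y hy hxy
  rcases hx with rfl | rfl | rfl <;> rcases hy with rfl | rfl | rfl <;>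
    first
      | exact absurd rfl hxy
      | assumption
      | exact hab.symm
      | exact hac.symm
      | exact hbc.symm

/-- harvesting a sun-like structure into a configuration -/
lemma harvest [Fintype V] {k : ℕ} (hk3 : 3 ≤ k) (w u : ZMod k → V)
    (hw : Function.Injective w)
    (hadj : ∀ i, G.Adj (w i) (w (i+1)))
    (hu1 : ∀ i, G.Adj (u i) (w i))
    (hu2 : ∀ i, G.Adj (u i) (w (i+1)))
    (hu3 : ∀ i a, a ≠ i → a ≠ i + 1 → u i ≠ w a ∧ ¬ G.Adj (u i) (w a)) :
    HasConfig G := by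
  haveI : NeZero k := ⟨by omega⟩
  have htri : ∀ i : ZMod k, G.IsClique {u i, w i, w (i+1)} := fun i =>
    triple_clique (hu1 i) (hu2 i) (hadj i)
  choose K hKmax hKsub using fun i => exists_maxclique_ext (G := G) (htri i)
  refine ⟨k, hk3, w, K, hw, hKmax, ?_⟩
  intro a j
  constructor
  · intro hmem
    by_contra hcon
    push_neg at hcon
    obtain ⟨hja, hj1a⟩ := hcon
    have haj : a ≠ j := fun hh => hja hh.symm
    have haj1 : a ≠ j + 1 := fun hh => hj1a hh.symm
    obtain ⟨hne, hnadj⟩ := hu3 j a haj haj1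
    have huK : u j ∈ K j := hKsub j (Set.mem_insert _ _)
    by_cases heq : u j = w a
    · exact hne heq
    · exact hnadj ((hKmax j).1 huK hmem heq)
  · intro hh
    rcases hh with hh | hh
    · rw [← hh]
      exact hKsub j (Set.mem_insert_of_mem _ (Set.mem_insert _ _))
    · rw [← hh]
      exact hKsub j (Set.mem_insert_of_mem _ (Set.mem_insert_of_mem _ rfl))

end Farber

namespace Farber

variable {V : Type*} {G : SimpleGraph V}

lemma shift_harvest [Fintype V] {n k : ℕ} [NeZero n] (hk3 : 3 ≤ k) (hnk : n = k + k)
    (c : ZMod n → V) (hinj : Function.Injective c)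
    (hadj : ∀ i, G.Adj (c i) (c (i+1)))
    (hm : ∀ y x : ZMod n, G.Adj (c y) (c x) → y.val % 2 ≠ x.val % 2 →
      (x = y + 1 ∨ y = x + 1))
    (r : ZMod n)
    (hadj2 : ∀ i : ZMod k, G.Adj (c (((2*i.val : ℕ) : ZMod n) + r))
      (c (((2*i.val : ℕ) : ZMod n) + r + 2))) :
    HasConfig G := by
  haveI : NeZero k := ⟨by omega⟩
  have hn6 : 6 ≤ n := by omega
  have hvlt : ∀ i : ZMod k, i.val < k := fun i => ZMod.val_lt i
  have hvi1 : ∀ i : ZMod k, (i+1).val = (i.val + 1) % k := by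
    intro i
    rw [ZMod.val_add, zmod_val_one' (by omega)]
  have hvk : ∀ (x y : ZMod k), x.val = y.val → x = y := fun _ _ h =>
    ZMod.val_injective k h
  -- parity of shifted positions
  have hparpos : ∀ (a : ℕ), (((a:ℕ) : ZMod n) + r).val % 2 = (a + r.val) % 2 := by
    intro a
    have h := zmod_par (n := n) ⟨k, by omega⟩ r (((a:ℕ) : ZMod n) + r)
    have e : ((a:ℕ) : ZMod n) + r - r = ((a:ℕ) : ZMod n) := by ring
    rw [e] at h
    have h2 : (((a:ℕ) : ZMod n)).val = a % n := ZMod.val_natCast n a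
    rw [h2] at h
    have h3 := Nat.div_add_mod a n
    have hdvd : 2 ∣ n * (a / n) := Dvd.dvd.mul_right ⟨k, by omega⟩ _
    obtain ⟨t, ht⟩ := hdvd
    omega
  have hD : ∀ i : ZMod k, ((2 * (i+1).val : ℕ) : ZMod n) = ((2 * i.val : ℕ) : ZMod n) + 2 := by
    intro i
    by_cases hlt : i.val + 1 < k
    · rw [hvi1, Nat.mod_eq_of_lt hlt]
      push_cast; ring
    · have h1 : i.val + 1 = k := by have := hvlt i; omega
      rw [hvi1, h1, Nat.mod_self]
      have h2 : ((2 * i.val : ℕ) : ZMod n) + 2 = ((2 * i.val + 2 : ℕ) : ZMod n) := by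
        push_cast; ring
      rw [h2]
      have h3 : 2 * i.val + 2 = n := by omega
      rw [h3, ZMod.natCast_self]
      simp
  set w : ZMod k → V := fun i => c (((2 * i.val : ℕ) : ZMod n) + r) with hw_def
  set uu : ZMod k → V := fun i => c (((2 * i.val : ℕ) : ZMod n) + r + 1) with huu_def
  -- positions distinct → ZMod k conclusions
  have hcc : ∀ (x y : ℕ), x < 2*n → y < 2*n → ((x : ZMod n) = (y : ZMod n)) →
      (x = y ∨ x + n = y ∨ y + n = x) := fun x y hx hy h =>
    cast_eq_cases (by omega) hx hy h
  have hwinj : Function.Injective w := by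
    intro a b hab
    simp only [hw_def] at hab
    have h0 := hinj hab
    have h1 : ((2*a.val : ℕ) : ZMod n) = ((2*b.val : ℕ) : ZMod n) := by
      have := congrArg (fun x => x - r) h0
      simpa using this
    have := hcc _ _ (by have := hvlt a; omega) (by have := hvlt b; omega) h1
    apply hvk
    have ha := hvlt a; have hb := hvlt b
    omega
  have hwadj : ∀ i, G.Adj (w i) (w (i+1)) := by
    intro i
    simp only [hw_def]
    have := hadj2 i
    have e : ((2 * (i+1).val : ℕ) : ZMod n) + r = ((2 * i.val : ℕ) : ZMod n) + r + 2 := by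
      rw [hD i]; ring
    rw [e]
    exact this
  have hu1 : ∀ i, G.Adj (uu i) (w i) := by
    intro i
    simp only [hw_def, huu_def]
    exact (hadj (((2 * i.val : ℕ) : ZMod n) + r)).symm
  have hu2 : ∀ i, G.Adj (uu i) (w (i+1)) := by
    intro i
    simp only [hw_def, huu_def]
    have := hadj ((((2 * i.val : ℕ) : ZMod n) + r) + 1)
    have e : ((2 * (i+1).val : ℕ) : ZMod n) + r = ((2 * i.val : ℕ) : ZMod n) + r + 1 + 1 := by
      rw [hD i]; ring
    rw [e]
    exact this
  have hu3 : ∀ i a : ZMod k, a ≠ i → a ≠ i + 1 → uu i ≠ w a ∧ ¬ G.Adj (uu i) (w a) := by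
    intro i a hai hai1
    have hia := hvlt i; have haa := hvlt a
    constructor
    · intro h
      simp only [hw_def, huu_def] at h
      have h0 := hinj h
      have h1 : ((2*i.val + 1 : ℕ) : ZMod n) = ((2*a.val : ℕ) : ZMod n) := by
        have := congrArg (fun x => x - r) h0
        push_cast at this ⊢
        linear_combination this
      have := hcc _ _ (by omega) (by omega) h1
      omega
    · intro hA
      simp only [hw_def, huu_def] at hA
      have hpar1 : ((((2*i.val : ℕ) : ZMod n) + r + 1)).val % 2 ≠
          ((((2*a.val : ℕ) : ZMod n) + r)).val % 2 := by
        have e1 : (((2*i.val : ℕ) : ZMod n) + r + 1) = (((2*i.val + 1 : ℕ) : ZMod n) + r) := by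
          push_cast; ring
        rw [e1]
        rw [hparpos (2*i.val + 1), hparpos (2*a.val)]
        omega
      rcases hm _ _ hA hpar1 with h | h
      · -- w-position = uu-position + 1 : a = i + 1
        apply hai1
        have h1 : ((2*a.val : ℕ) : ZMod n) = ((2*i.val + 2 : ℕ) : ZMod n) := by
          have := congrArg (fun x => x - r) h
          push_cast at this ⊢
          linear_combination this
        have := hcc _ _ (by omega) (by omega) h1
        apply hvk
        rw [hvi1]
        rcases this with h2 | h2 | h2
        · have : a.val = i.val + 1 := by omega
          rw [this, Nat.mod_eq_of_lt (by omega)]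
        · have hval : a.val = 0 ∧ i.val + 1 = k := by omega
          rw [hval.1, hval.2, Nat.mod_self]
        · omega
      · -- uu-position = w-position + 1 : a = i
        apply hai
        have h1 : ((2*i.val + 1 : ℕ) : ZMod n) = ((2*a.val + 1 : ℕ) : ZMod n) := by
          have := congrArg (fun x => x - r) h
          push_cast at this ⊢
          linear_combination this
        have := hcc _ _ (by omega) (by omega) h1
        apply hvk
        omega
  exact harvest hk3 w uu hwinj hwadj hu1 hu2 hu3

end Farber

namespace Farber

variable {V : Type*} {G : SimpleGraph V}

lemma badcycle_config [Fintype V] (hch : G.Chordal) {n : ℕ} (hn6 : 6 ≤ n) (hev : Even n)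
    (c : ZMod n → V) (hcyc : G.IsCycleEmb c)
    (hnsc : ∀ i j, ¬ G.IsStrongChordOf c i j) : HasConfig G := by
  classical
  haveI : NeZero n := ⟨by omega⟩
  obtain ⟨hinj, hadj⟩ := hcyc
  obtain ⟨k, hk⟩ := hev
  have hk3 : 3 ≤ k := by omega
  have hev' : Even n := ⟨k, hk⟩
  -- all chords are even ("mono")
  have hm : ∀ y x : ZMod n, G.Adj (c y) (c x) → y.val % 2 ≠ x.val % 2 →
      (x = y + 1 ∨ y = x + 1) := by
    intro y x hAdj hp
    by_contra hcon
    push_neg at hcon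
    apply hnsc y x
    refine ⟨⟨hAdj, hcon.1, hcon.2⟩, ?_⟩
    rw [Nat.odd_iff]
    have := zmod_par hev' y x
    omega
  have hval2 : (2 : ZMod n).val = 2 := zmod_val_two' (by omega)
  have hso : ∀ o : ZMod n, o - 1 + 1 = o := fun o => by ring
  have hoddm1 : ∀ o : ZMod n, o.val % 2 = 1 → (o - 1).val % 2 = 0 := by
    intro o ho
    have := zmod_conspar (n := n) (by omega) hev' (o - 1)
    rw [hso o] at this
    omega
  have hoddm2 : ∀ o : ZMod n, o.val % 2 = 1 → (o - 2).val % 2 = 1 := by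
    intro o ho
    have h := zmod_par hev' (o - 2) o
    have h1 : o - (o - 2) = 2 := by ring
    rw [h1, hval2] at h
    omega
  -- per-vertex: a non-ear odd vertex has its ±2 chord
  have hstep3 : ∀ o : ZMod n, o.val % 2 = 1 → ¬ G.Adj (c (o-1)) (c (o+1)) →
      G.Adj (c (o-2)) (c o) := by
    intro o ho hne
    obtain ⟨z, ⟨y, rfl⟩, hz1, hz2, hz3, hz4⟩ :=
      edge_cone hch n (by omega) c ⟨hinj, hadj⟩ (o - 1)
    rw [hso o] at hz2 hz4
    rcases Nat.mod_two_eq_zero_or_one y.val with hy | hy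
    · rcases hm y o hz4 (by omega) with h | h
      · exact absurd (congrArg c (show y = o - 1 by linear_combination -h)) hz1
      · exfalso
        apply hne
        rw [← h]
        exact hz3.symm
    · rcases hm y (o-1) hz3 (by have := hoddm1 o ho; omega) with h | h
      · have hy2 : y = o - 2 := by linear_combination -h
        rw [hy2] at hz4
        exact hz4
      · exact absurd (congrArg c (show y = o by linear_combination h)) hz2
  -- closure: a non-ear odd vertex has non-ear predecessor (o-2)
  have hstep4 : ∀ o : ZMod n, o.val % 2 = 1 → ¬ G.Adj (c (o-1)) (c (o+1)) →
      G.Adj (c (o-3)) (c (o-1)) → False := by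
    intro o ho hne hear
    haveI : NeZero (n-1) := ⟨by omega⟩
    set g : ZMod (n-1) → V := fun t => c (o - 1 + ((t.val : ℕ) : ZMod n)) with hg
    have hval_lt : ∀ t : ZMod (n-1), t.val < n - 1 := fun t => ZMod.val_lt t
    have hginj : Function.Injective g := by
      intro t₁ t₂ ht
      simp only [hg] at ht
      have h0 := hinj ht
      have h2 : ((t₁.val : ℕ) : ZMod n) = ((t₂.val : ℕ) : ZMod n) := by
        have := congrArg (fun x => x - (o - 1)) h0
        simpa using this
      have h3 := congrArg ZMod.val h2
      rw [ZMod.val_cast_of_lt (by have := hval_lt t₁; omega),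
        ZMod.val_cast_of_lt (by have := hval_lt t₂; omega)] at h3
      exact ZMod.val_injective _ h3
    have hgadj : ∀ t : ZMod (n-1), G.Adj (g t) (g (t+1)) := by
      intro t
      by_cases hlast : t.val = n - 2
      · have ht1 : t + 1 = 0 := by
          rw [← zmod_cast_val t, hlast]
          have h0 : ((n - 1 : ℕ) : ZMod (n-1)) = 0 := ZMod.natCast_self _
          calc ((n-2 : ℕ) : ZMod (n-1)) + 1 = ((n - 2 + 1 : ℕ) : ZMod (n-1)) := by
                push_cast; ring
            _ = ((n - 1 : ℕ) : ZMod (n-1)) := by congr 1; omega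
            _ = 0 := h0
        have hgt : g t = c (o - 3) := by
          simp only [hg, hlast]
          congr 1
          have hc2 : ((n - 2 : ℕ) : ZMod n) = -2 := by
            rw [Nat.cast_sub (by omega), ZMod.natCast_self]
            push_cast
            ring
          rw [hc2]
          ring
        have hgt1 : g (t + 1) = c (o - 1) := by
          rw [ht1]
          simp only [hg, ZMod.val_zero]
          congr 1
          push_cast
          ring
        rw [hgt, hgt1]
        exact hear
      · have hstep : (t + 1).val = t.val + 1 := by
          rw [ZMod.val_add, zmod_val_one' (by omega)]
          exact Nat.mod_eq_of_lt (by have := hval_lt t; omega)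
        simp only [hg, hstep]
        have heq : c (o - 1 + ((t.val + 1 : ℕ) : ZMod n)) =
            c ((o - 1 + ((t.val : ℕ) : ZMod n)) + 1) := by
          congr 1
          push_cast
          ring
        rw [heq]
        exact hadj _
    obtain ⟨z, ⟨t, rfl⟩, hz1, hz2, hz3, hz4⟩ :=
      edge_cone hch (n-1) (by omega) g ⟨hginj, hgadj⟩ 0
    have hg0 : g 0 = c (o - 1) := by
      simp only [hg, ZMod.val_zero]
      congr 1
      push_cast
      ring
    have hg1 : g (0 + 1) = c o := by
      have hv01 : ((0 : ZMod (n-1)) + 1).val = 1 := by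
        rw [zero_add, zmod_val_one' (by omega)]
      simp only [hg, hv01]
      congr 1
      push_cast
      ring
    rw [hg0] at hz1 hz3
    rw [hg1] at hz2 hz4
    have hzy : g t = c (o - 1 + ((t.val : ℕ) : ZMod n)) := rfl
    set y : ZMod n := o - 1 + ((t.val : ℕ) : ZMod n) with hy_def
    rw [hzy] at hz1 hz2 hz3 hz4
    have hyne : y ≠ o - 2 := by
      intro hyeq
      have h5 : ((t.val : ℕ) : ZMod n) = ((n - 1 : ℕ) : ZMod n) := by
        rw [Nat.cast_sub (by omega), ZMod.natCast_self]
        have : ((t.val : ℕ) : ZMod n) = -1 := by linear_combination hyeq - hy_def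
        rw [this]
        ring
      have h6 := congrArg ZMod.val h5
      rw [ZMod.val_cast_of_lt (by have := hval_lt t; omega),
        ZMod.val_cast_of_lt (by omega)] at h6
      have := hval_lt t
      omega
    rcases Nat.mod_two_eq_zero_or_one y.val with hy | hy
    · rcases hm y o hz4 (by omega) with h | h
      · exact hz1 (congrArg c (show y = o - 1 by linear_combination -h))
      · apply hne
        rw [← h]
        exact hz3.symm
    · rcases hm y (o-1) hz3 (by have := hoddm1 o ho; omega) with h | h
      · exact hyne (by linear_combination -h)
      · exact hz2 (congrArg c (show y = o by linear_combination h))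
  haveI : NeZero k := ⟨by omega⟩
  -- dichotomy
  by_cases hears : ∀ o : ZMod n, o.val % 2 = 1 → G.Adj (c (o-1)) (c (o+1))
  · -- all odd vertices are ears: harvest on the even class (r = 0)
    apply shift_harvest hk3 hk c hinj hadj hm 0
    intro i
    have hvlt : i.val < k := ZMod.val_lt i
    set o : ZMod n := ((2*i.val : ℕ) : ZMod n) + 1 with ho_def
    have hov : o.val = 2*i.val + 1 := by
      have : o = ((2*i.val + 1 : ℕ) : ZMod n) := by rw [ho_def]; push_cast; ring
      rw [this, ZMod.val_cast_of_lt (by omega)]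
    have hoodd : o.val % 2 = 1 := by omega
    have := hears o hoodd
    have e1 : o - 1 = ((2*i.val : ℕ) : ZMod n) + 0 := by rw [ho_def]; ring
    have e2 : o + 1 = ((2*i.val : ℕ) : ZMod n) + 0 + 2 := by rw [ho_def]; ring
    rw [e1, e2] at this
    exact this
  · -- some odd non-ear: then ALL odd are non-ear; harvest odd class (r = 1)
    push_neg at hears
    obtain ⟨u₀, hu₀odd, hu₀ne⟩ := hears
    have hiter : ∀ j : ℕ, (u₀ - 2*(j : ZMod n)).val % 2 = 1 ∧
        ¬ G.Adj (c ((u₀ - 2*(j : ZMod n)) - 1)) (c ((u₀ - 2*(j : ZMod n)) + 1)) := by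
      intro j
      induction j with
      | zero =>
        constructor
        · simpa using hu₀odd
        · simpa using hu₀ne
      | succ j ihj =>
        obtain ⟨hodd, hne⟩ := ihj
        have hodd2 : ((u₀ - 2*(j : ZMod n)) - 2).val % 2 = 1 := hoddm2 _ hodd
        have hne2 : ¬ G.Adj (c (((u₀ - 2*(j : ZMod n)) - 2) - 1))
            (c (((u₀ - 2*(j : ZMod n)) - 2) + 1)) := by
          intro hAdj
          apply hstep4 (u₀ - 2*(j : ZMod n)) hodd hne
          have e1 : ((u₀ - 2*(j : ZMod n)) - 2) - 1 = (u₀ - 2*(j : ZMod n)) - 3 := by ring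
          have e2 : ((u₀ - 2*(j : ZMod n)) - 2) + 1 = (u₀ - 2*(j : ZMod n)) - 1 := by ring
          rw [e1, e2] at hAdj
          exact hAdj
        have e3 : u₀ - 2*(((j+1 : ℕ)) : ZMod n) = (u₀ - 2*(j : ZMod n)) - 2 := by
          push_cast
          ring
        rw [e3]
        exact ⟨hodd2, hne2⟩
    have hallodd : ∀ o : ZMod n, o.val % 2 = 1 → G.Adj (c (o-2)) (c o) := by
      intro o ho
      have hpar0 := zmod_par hev' o u₀
      have heven : (u₀ - o).val % 2 = 0 := by omega
      obtain ⟨j, hj⟩ : ∃ j, (u₀ - o).val = 2*j := ⟨(u₀ - o).val/2, by omega⟩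
      have hcast : (((u₀ - o).val : ℕ) : ZMod n) = u₀ - o := zmod_cast_val _
      have ho_eq : o = u₀ - 2*((j : ℕ) : ZMod n) := by
        have h7 : ((2*j : ℕ) : ZMod n) = u₀ - o := by rw [← hj, hcast]
        push_cast at h7
        linear_combination h7
      obtain ⟨hodd', hne'⟩ := hiter j
      rw [← ho_eq] at hne'
      exact hstep3 o ho hne'
    apply shift_harvest hk3 hk c hinj hadj hm 1
    intro i
    have hvlt : i.val < k := ZMod.val_lt i
    set o : ZMod n := ((2*i.val : ℕ) : ZMod n) + 3 with ho_def
    have hov : o.val % 2 = 1 := by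
      have h8 : o = ((2*i.val + 3 : ℕ) : ZMod n) := by rw [ho_def]; push_cast; ring
      rw [h8, ZMod.val_natCast]
      rw [Nat.mod_mod_of_dvd _ ⟨k, by omega⟩]
      omega
    have := hallodd o hov
    have e1 : o - 2 = ((2*i.val : ℕ) : ZMod n) + 1 := by rw [ho_def]; ring
    have e2 : o = ((2*i.val : ℕ) : ZMod n) + 1 + 2 := by rw [ho_def]; ring
    rw [e1] at this
    rw [e2] at this
    exact this

end Farber

namespace Farber

open Function

variable {V : Type*} {G : SimpleGraph V}

/-- Shrinking a configuration along a maximal clique that joins `v a` to `v b`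
and avoids the vertices strictly between them. -/
lemma config_shrink [Fintype V] {m : ℕ} (hm3 : 3 ≤ m) (v : ZMod m → V)
    (K : ZMod m → Set V) (hv : Function.Injective v)
    (hK : ∀ j, G.IsMaxClique (K j))
    (hmem : ∀ i j, v i ∈ K j ↔ (j = i ∨ j + 1 = i))
    (a b : ZMod m) {g : ℕ} (hg : (b - a).val = g) (hg2 : 2 ≤ g) (hgm : g ≤ m - 2)
    (M : Set V) (hM : G.IsMaxClique M) (hva : v a ∈ M) (hvb : v b ∈ M)
    (havoid : ∀ t : ℕ, 1 ≤ t → t < g → v (a + ((t : ℕ) : ZMod m)) ∉ M) :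
    ∃ (v' : ZMod (g+1) → V) (K' : ZMod (g+1) → Set V),
      Function.Injective v' ∧ (∀ j, G.IsMaxClique (K' j)) ∧
      (∀ i j, v' i ∈ K' j ↔ (j = i ∨ j + 1 = i)) := by
  haveI : NeZero m := ⟨by omega⟩
  haveI : NeZero (g+1) := ⟨by omega⟩
  have hvlt : ∀ t : ZMod (g+1), t.val < g + 1 := fun t => ZMod.val_lt t
  have hcastinj : ∀ (s t : ℕ), s ≤ g → t ≤ g →
      ((s : ZMod m) = (t : ZMod m)) → s = t := by
    intro s t hs ht hcast
    have := congrArg ZMod.val hcast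
    rw [ZMod.val_cast_of_lt (by omega), ZMod.val_cast_of_lt (by omega)] at this
    exact this
  have hb_eq : b = a + ((g : ℕ) : ZMod m) := by
    have : ((g : ℕ) : ZMod m) = b - a := by rw [← hg]; exact zmod_cast_val _
    rw [this]; ring
  refine ⟨fun t => v (a + ((t.val : ℕ) : ZMod m)),
    fun t => if t.val = g then M else K (a + ((t.val : ℕ) : ZMod m)), ?_, ?_, ?_⟩
  · intro t₁ t₂ ht
    have h0 := hv ht
    have h1 : ((t₁.val : ℕ) : ZMod m) = ((t₂.val : ℕ) : ZMod m) := by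
      have := congrArg (fun z => z - a) h0
      simpa using this
    exact ZMod.val_injective _ (hcastinj _ _ (by have := hvlt t₁; omega)
      (by have := hvlt t₂; omega) h1)
  · intro j
    by_cases hj : j.val = g
    · simpa [hj] using hM
    · simpa [hj] using hK _
  · intro s t
    have hsg := hvlt s
    have htg := hvlt t
    by_cases ht : t.val = g
    · -- column M
      simp only [ht, if_pos]
      have htt : t = ((g : ℕ) : ZMod (g+1)) := by
        rw [← zmod_cast_val t, ht]
      have ht1 : t + 1 = 0 := by
        rw [htt]
        have h0 : ((g + 1 : ℕ) : ZMod (g+1)) = 0 := by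
          exact_mod_cast ZMod.natCast_self (g+1)
        push_cast at h0 ⊢
        linear_combination h0
      constructor
      · intro hmem'
        by_cases hs0 : s.val = 0
        · right
          rw [ht1]
          exact (ZMod.val_injective _ (by rw [hs0, ZMod.val_zero])).symm
        · by_cases hsg' : s.val = g
          · left
            exact ZMod.val_injective _ (by rw [ht, hsg'])
          · exfalso
            exact havoid s.val (by omega) (by omega) hmem'
      · intro hst
        rcases hst with hst | hst
        · have : s.val = g := by rw [← hst, ht]
          rw [this, ← hb_eq]
          exact hvb
        · have : s = 0 := by rw [← hst, ht1]
          rw [this]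
          simpa using hva
    · -- column K (a + t.val)
      simp only [ht, if_neg, if_false]
      rw [hmem]
      have hstep : (t + 1).val = t.val + 1 := by
        rw [ZMod.val_add, zmod_val_one' (by omega)]
        exact Nat.mod_eq_of_lt (by omega)
      constructor
      · intro hst
        rcases hst with hst | hst
        · left
          have h1 : ((t.val : ℕ) : ZMod m) = ((s.val : ℕ) : ZMod m) := by
            have := congrArg (fun z => z - a) hst
            simpa using this
          exact ZMod.val_injective _ (hcastinj _ _ (by omega) (by omega) h1)
        · right
          have h1 : ((t.val + 1 : ℕ) : ZMod m) = ((s.val : ℕ) : ZMod m) := by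
            have h2 : a + ((t.val : ℕ) : ZMod m) + 1 = a + ((t.val + 1 : ℕ) : ZMod m) := by
              push_cast; ring
            rw [h2] at hst
            have := congrArg (fun z => z - a) hst
            simpa using this
          have h3 : t.val + 1 = s.val := hcastinj _ _ (by omega) (by omega) h1
          have h4 : (t+1).val = s.val := by rw [hstep, h3]
          exact ZMod.val_injective _ h4
      · intro hst
        rcases hst with hst | hst
        · left
          rw [← hst]
        · right
          have h4 : s.val = t.val + 1 := by rw [← hst, hstep]
          rw [h4]
          push_cast
          ring
  
end Farber

namespace Farber

variable {V : Type*} {G : SimpleGraph V}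

lemma sc_no_config_size [Fintype V] (hsc : G.StronglyChordal) :
    ∀ m : ℕ, 3 ≤ m → ∀ (v : ZMod m → V) (K : ZMod m → Set V),
      Function.Injective v → (∀ j, G.IsMaxClique (K j)) →
      (∀ i j, v i ∈ K j ↔ (j = i ∨ j + 1 = i)) → False := by
  intro m
  induction m using Nat.strong_induction_on with
  | _ m ih =>
    intro hm3 v K hv hK hmem
    haveI : NeZero m := ⟨by omega⟩
    classical
    have hvmem : ∀ i : ZMod m, v i ∈ K i := fun i => (hmem i i).mpr (Or.inl rfl)
    have hvmem1 : ∀ i : ZMod m, v (i+1) ∈ K i := fun i => (hmem (i+1) i).mpr (Or.inr rfl)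
    have hne1 : ∀ i : ZMod m, i ≠ i + 1 := zmod_ne_add_one hm3
    have hne2 : ∀ i : ZMod m, i ≠ i + 2 := zmod_ne_add_two hm3
    have hadjc : ∀ i : ZMod m, G.Adj (v i) (v (i+1)) :=
      fun i => (hK i).1 (hvmem i) (hvmem1 i) (fun h => hne1 i (hv h))
    -- CLAB: a maximal clique through a non-consecutive pair contains all cycle vertices
    have hclab : ∀ (M : Set V), G.IsMaxClique M → ∀ a b : ZMod m,
        b ≠ a → b ≠ a + 1 → a ≠ b + 1 → v a ∈ M → v b ∈ M → ∀ c, v c ∈ M := by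
      intro M hM a b hba hba1 hab1 hvaM hvbM c
      by_contra hc
      have hQex : ∃ t : ℕ, 1 ≤ t ∧ v (c + (t : ZMod m)) ∈ M := by
        refine ⟨(a - c).val, ?_, ?_⟩
        · have hac : a - c ≠ 0 := by
            intro h
            exact hc (by
              have : a = c := by linear_combination h
              rw [← this]; exact hvaM)
          have h2 : (a - c).val ≠ 0 := fun h =>
            hac (ZMod.val_injective m (by rw [h, ZMod.val_zero]))
          omega
        · have h3 : c + (((a - c).val : ℕ) : ZMod m) = a := by
            rw [zmod_cast_val]; ring
          rw [h3]; exact hvaM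
      have hRex : ∃ t : ℕ, 1 ≤ t ∧ v (c - (t : ZMod m)) ∈ M := by
        refine ⟨(c - b).val, ?_, ?_⟩
        · have hbc : c - b ≠ 0 := by
            intro h
            exact hc (by
              have : c = b := by linear_combination h
              rw [this]; exact hvbM)
          have h2 : (c - b).val ≠ 0 := fun h =>
            hbc (ZMod.val_injective m (by rw [h, ZMod.val_zero]))
          omega
        · have h3 : c - (((c - b).val : ℕ) : ZMod m) = b := by
            rw [zmod_cast_val]; ring
          rw [h3]; exact hvbM
      set t0 := Nat.find hQex with ht0
      set s0 := Nat.find hRex with hs0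
      obtain ⟨ht0_1, ht0_mem⟩ := Nat.find_spec hQex
      obtain ⟨hs0_1, hs0_mem⟩ := Nat.find_spec hRex
      have ht0_min : ∀ t : ℕ, 1 ≤ t → t < t0 → v (c + (t : ZMod m)) ∉ M := by
        intro t h1 h2 hmem'
        exact Nat.find_min hQex h2 ⟨h1, hmem'⟩
      have hs0_min : ∀ t : ℕ, 1 ≤ t → t < s0 → v (c - (t : ZMod m)) ∉ M := by
        intro t h1 h2 hmem'
        exact Nat.find_min hRex h2 ⟨h1, hmem'⟩
      -- bounds
      have ht0_ub : t0 ≤ m - 1 := by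
        have hwit : (a - c).val ≤ m - 1 := by have := ZMod.val_lt (a - c); omega
        have : t0 ≤ (a - c).val := Nat.find_le (by
          constructor
          · have hac : a - c ≠ 0 := by
              intro h
              exact hc (by
                have : a = c := by linear_combination h
                rw [← this]; exact hvaM)
            have h2 : (a - c).val ≠ 0 := fun h =>
              hac (ZMod.val_injective m (by rw [h, ZMod.val_zero]))
            omega
          · have h3 : c + (((a - c).val : ℕ) : ZMod m) = a := by
              rw [zmod_cast_val]; ring
            rw [h3]; exact hvaM)
        omega
      have hs0_ub : s0 ≤ m - 1 := by
        have hwit : (c - b).val ≤ m - 1 := by have := ZMod.val_lt (c - b); omega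
        have : s0 ≤ (c - b).val := Nat.find_le (by
          constructor
          · have hbc : c - b ≠ 0 := by
              intro h
              exact hc (by
                have : c = b := by linear_combination h
                rw [this]; exact hvbM)
            have h2 : (c - b).val ≠ 0 := fun h =>
              hbc (ZMod.val_injective m (by rw [h, ZMod.val_zero]))
            omega
          · have h3 : c - (((c - b).val : ℕ) : ZMod m) = b := by
              rw [zmod_cast_val]; ring
            rw [h3]; exact hvbM)
        omega
      set e : ZMod m := c - (s0 : ZMod m) with he
      set g' := s0 + t0 with hg'
      -- interior of the gap avoids M
      have hinterior : ∀ r : ℕ, 1 ≤ r → r < g' → v (e + (r : ZMod m)) ∉ M := by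
        intro r h1 h2
        rcases Nat.lt_trichotomy r s0 with hr | hr | hr
        · have heq : e + (r : ZMod m) = c - ((s0 - r : ℕ) : ZMod m) := by
            rw [he, Nat.cast_sub (by omega)]
            ring
          rw [heq]
          exact hs0_min (s0 - r) (by omega) (by omega)
        · have heq : e + (r : ZMod m) = c := by rw [he, hr]; ring
          rw [heq]
          exact hc
        · have heq : e + (r : ZMod m) = c + ((r - s0 : ℕ) : ZMod m) := by
            rw [he, Nat.cast_sub (by omega)]
            ring
          rw [heq]
          exact ht0_min (r - s0) (by omega) (by omega)
      -- key membership facts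
      have hd_mem : v (e + (g' : ℕ) * 1) ∈ M := by
        have heq : e + ((g' : ℕ) : ZMod m) * 1 = c + (t0 : ZMod m) := by
          rw [he, hg']
          push_cast
          ring
        rw [heq]
        exact ht0_mem
      have he_mem : v e ∈ M := by
        rw [he]
        exact hs0_mem
      -- where are a and b relative to e?
      have hab_pos : ∀ z : ZMod m, v z ∈ M → z = e ∨
          (1 ≤ (z - e).val ∧ (z - e).val ≤ m - 1 ∧ v (e + ((z - e).val : ZMod m)) ∈ M) := by
        intro z hz
        by_cases hze : z = e
        · exact Or.inl hze
        · right
          have hne' : z - e ≠ 0 := fun h => hze (by linear_combination h)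
          have h2 : (z - e).val ≠ 0 := fun h =>
            hne' (ZMod.val_injective m (by rw [h, ZMod.val_zero]))
          have h3 := ZMod.val_lt (z - e)
          refine ⟨by omega, by omega, ?_⟩
          have heq : e + (((z - e).val : ℕ) : ZMod m) = z := by
            rw [zmod_cast_val]; ring
          rw [heq]
          exact hz
      -- g' cannot be ≥ m - 1
      have hg'_ub : g' ≤ m - 2 := by
        by_contra hbig
        push_neg at hbig
        -- g' ≥ m - 1 : interior covers residues 1..m-2 after e
        have hcover : ∀ z : ZMod m, v z ∈ M → z = e ∨ (z - e).val = m - 1 := by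
          intro z hz
          rcases hab_pos z hz with h | ⟨h1, h2, h3⟩
          · exact Or.inl h
          · right
            by_contra hzo
            exact hinterior ((z - e).val) h1 (by omega) h3
        -- a and b both in {e, e + (m-1)} : but they are distinct and non-consecutive
        have hval_inj : ∀ z w : ZMod m, (z - e).val = (w - e).val → z = w := by
          intro z w hzw
          have := ZMod.val_injective m hzw
          have h2 : z - e = w - e := this
          linear_combination h2
        rcases hcover a hvaM with ha | ha <;> rcases hcover b hvbM with hb | hb
        · exact hba (hb.trans ha.symm)
        · -- a = e, (b - e).val = m - 1 : b = e - 1 = a - 1 : a = b + 1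
          apply hab1
          have hbe : b - e = ((m - 1 : ℕ) : ZMod m) := by
            rw [← hb, zmod_cast_val]
          have hm1 : ((m - 1 : ℕ) : ZMod m) = -1 := by
            rw [Nat.cast_sub (by omega), ZMod.natCast_self]
            push_cast
            ring
          rw [hm1] at hbe
          rw [ha]
          linear_combination -hbe
        · apply hba1
          have hae : a - e = ((m - 1 : ℕ) : ZMod m) := by
            rw [← ha, zmod_cast_val]
          have hm1 : ((m - 1 : ℕ) : ZMod m) = -1 := by
            rw [Nat.cast_sub (by omega), ZMod.natCast_self]
            push_cast
            ring
          rw [hm1] at hae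
          rw [hb]
          linear_combination -hae
        · apply hba
          exact hval_inj b a (hb.trans ha.symm)
      have hg'_2 : 2 ≤ g' := by omega
      -- shrink
      have hgval : ((e + (g' : ZMod m)) - e).val = g' := by
        have h1 : (e + ((g' : ℕ) : ZMod m)) - e = ((g' : ℕ) : ZMod m) := by ring
        rw [h1, ZMod.val_cast_of_lt (by omega)]
      obtain ⟨v', K', h1, h2, h3⟩ := config_shrink hm3 v K hv hK hmem e
        (e + ((g' : ℕ) : ZMod m)) hgval hg'_2 hg'_ub M hM he_mem
        (by
          have heq : e + ((g' : ℕ) : ZMod m) = e + ((g' : ℕ) : ZMod m) * 1 := by ring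
          rw [heq]; exact hd_mem)
        (fun t h1 h2 => hinterior t h1 h2)
      exact ih (g' + 1) (by omega) (by omega) v' K' h1 h2 h3
    -- witnesses x j
    have hxex : ∀ j : ZMod m, ∃ x, x ∈ K j ∧ x ≠ v (j+2) ∧ ¬ G.Adj x (v (j+2)) := by
      intro j
      by_contra hcon
      push_neg at hcon
      have hmem2 : v (j+2) ∈ K j := by
        apply mem_maxclique_of_adj (hK j)
        intro z hz
        by_cases hzeq : z = v (j+2)
        · exact Or.inl hzeq
        · exact Or.inr (hcon z hz hzeq)
      rw [hmem] at hmem2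
      rcases hmem2 with h | h
      · exact hne2 j h
      · exact hne1 (j+1) (by linear_combination h)
    choose x hxK hxne hxnadj using hxex
    -- all cycle vertices pairwise adjacent
    have hadjall : ∀ c d : ZMod m, c ≠ d → G.Adj (v c) (v d) := by
      by_cases hm4 : 4 ≤ m
      · obtain ⟨i0, j0, h0, h1, h2⟩ := hsc.1 m hm4 v ⟨hv, hadjc⟩
        obtain ⟨L, hL, hLsub⟩ := exists_maxclique_ext (G := G) (pair_clique h0)
        have hall := hclab L hL i0 j0
          (fun h => h0.ne (congrArg v h.symm)) h1 h2
          (hLsub (Set.mem_insert _ _)) (hLsub (Set.mem_insert_of_mem _ rfl))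
        intro c d hcd
        exact hL.1 (hall c) (hall d) (fun h => hcd (hv h))
      · -- m = 3
        intro c d hcd
        have hdc : d - c ≠ 0 := fun h => hcd (by linear_combination -h)
        have hval := ZMod.val_lt (d - c)
        have hnz : (d - c).val ≠ 0 := fun h =>
          hdc (ZMod.val_injective m (by rw [h, ZMod.val_zero]))
        have h12 : (d - c).val = 1 ∨ (d - c).val = 2 := by omega
        rcases h12 with h | h
        · have hd1 : d = c + 1 := by
            have h5 : ((1:ℕ) : ZMod m) = d - c := by rw [← h]; exact zmod_cast_val _
            push_cast at h5
            linear_combination -h5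
          rw [hd1]; exact hadjc c
        · have hd2 : d = c + 2 := by
            have h5 : ((2:ℕ) : ZMod m) = d - c := by rw [← h]; exact zmod_cast_val _
            push_cast at h5
            linear_combination -h5
          have h30 : ((3:ℕ) : ZMod m) = 0 := by
            have : (3:ℕ) = m := by omega
            rw [this]; exact ZMod.natCast_self m
          have hc_eq : c = d + 1 := by
            rw [hd2]
            push_cast at h30
            linear_combination -h30
          rw [hc_eq]; exact (hadjc d).symm
    -- x j is not a cycle vertex
    have hxnv : ∀ j c : ZMod m, x j ≠ v c := by
      intro j c hxc
      by_cases hcj : c = j ∨ c = j + 1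
      · have hcne : c ≠ j + 2 := by
          rcases hcj with rfl | rfl
          · exact hne2 c
          · intro h
            exact hne1 (j+1) (by linear_combination h)
        exact hxnadj j (by rw [hxc]; exact hadjall c (j+2) hcne)
      · push_neg at hcj
        have hmem2 : v c ∈ K j := by rw [← hxc]; exact hxK j
        rw [hmem] at hmem2
        rcases hmem2 with h | h
        · exact hcj.1 h.symm
        · exact hcj.2 h.symm
    -- x j is adjacent to no far cycle vertex
    have hxprop : ∀ j a : ZMod m, a ≠ j → a ≠ j + 1 → ¬ G.Adj (x j) (v a) := by
      intro j a haj haj1 hA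
      by_cases ha2 : a = j + 2
      · exact hxnadj j (ha2 ▸ hA)
      · by_cases haj1' : j = a + 1
        · -- triangle x j, v (j+1), v a
          have hT : G.IsClique {x j, v (j+1), v a} := triple_clique
            ((hK j).1 (hxK j) (hvmem1 j) (hxnv j (j+1)))
            hA
            (hadjall (j+1) a (fun h => haj1 h.symm))
          obtain ⟨M, hM, hMsub⟩ := exists_maxclique_ext (G := G) hT
          have hall := hclab M hM (j+1) a haj1
            (fun h => ha2 (by linear_combination h))
            (fun h => haj (add_right_cancel h).symm)
            (hMsub (Set.mem_insert_of_mem _ (Set.mem_insert _ _)))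
            (hMsub (Set.mem_insert_of_mem _ (Set.mem_insert_of_mem _ rfl)))
          exact hxnadj j (hM.1 (hMsub (Set.mem_insert _ _)) (hall (j+2)) (hxnv j (j+2)))
        · -- triangle x j, v j, v a
          have hT : G.IsClique {x j, v j, v a} := triple_clique
            ((hK j).1 (hxK j) (hvmem j) (hxnv j j))
            hA
            (hadjall j a (fun h => haj h.symm))
          obtain ⟨M, hM, hMsub⟩ := exists_maxclique_ext (G := G) hT
          have hall := hclab M hM j a haj haj1 haj1'
            (hMsub (Set.mem_insert_of_mem _ (Set.mem_insert _ _)))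
            (hMsub (Set.mem_insert_of_mem _ (Set.mem_insert_of_mem _ rfl)))
          exact hxnadj j (hM.1 (hMsub (Set.mem_insert _ _)) (hall (j+2)) (hxnv j (j+2)))
    -- x is injective
    have hxinj : ∀ i j : ZMod m, x i = x j → i = j := by
      intro i j hij
      by_contra hne
      have h1 : x i ∈ K j := by rw [hij]; exact hxK j
      by_cases hji : j = i + 1
      · have hcond1 : j + 1 ≠ i := by
          rw [hji]
          intro h
          exact hne2 i (by linear_combination -h)
        have hcond2 : j + 1 ≠ i + 1 := by
          rw [hji]
          intro h
          exact hne1 (i+1) (by linear_combination -h)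
        exact hxprop i (j+1) hcond1 hcond2
          ((hK j).1 h1 (hvmem1 j) (hxnv i (j+1)))
      · exact hxprop i j (fun h => hne h.symm) hji
          ((hK j).1 h1 (hvmem j) (hxnv i j))
    -- the long cycle of length 2m
    have hm6 : 6 ≤ 2 * m := by omega
    haveI : NeZero (2*m) := ⟨by omega⟩
    set Z : ZMod (2*m) → V := fun t =>
      if t.val % 2 = 0 then v ((t.val / 2 : ℕ) : ZMod m)
      else x ((t.val / 2 : ℕ) : ZMod m) with hZ
    have hZval : ∀ t : ZMod (2*m), t.val < 2*m := fun t => ZMod.val_lt t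
    have hhalf : ∀ t : ZMod (2*m), t.val / 2 < m := by
      intro t; have := hZval t; omega
    have hZinj : Function.Injective Z := by
      intro t₁ t₂ ht
      simp only [hZ] at ht
      have hv1 := hZval t₁; have hv2 := hZval t₂
      have hval_conv : ∀ t : ZMod (2*m), (((t.val / 2 : ℕ)) : ZMod m).val = t.val / 2 :=
        fun t => ZMod.val_cast_of_lt (hhalf t)
      by_cases h1 : t₁.val % 2 = 0 <;> by_cases h2 : t₂.val % 2 = 0
      · rw [if_pos h1, if_pos h2] at ht
        have h3 := congrArg ZMod.val (hv ht)
        rw [hval_conv, hval_conv] at h3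
        exact ZMod.val_injective _ (by omega)
      · rw [if_pos h1, if_neg h2] at ht
        exact absurd ht.symm (hxnv _ _)
      · rw [if_neg h1, if_pos h2] at ht
        exact absurd ht (hxnv _ _)
      · rw [if_neg h1, if_neg h2] at ht
        have h3 := congrArg ZMod.val (hxinj _ _ ht)
        rw [hval_conv, hval_conv] at h3
        exact ZMod.val_injective _ (by omega)
    have hZadj : ∀ t : ZMod (2*m), G.Adj (Z t) (Z (t+1)) := by
      intro t
      have hv1 := hZval t
      by_cases hlast : t.val = 2*m - 1
      · have ht1 : t + 1 = 0 := by
          rw [← zmod_cast_val t, hlast]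
          have h0 : ((2*m : ℕ) : ZMod (2*m)) = 0 := ZMod.natCast_self _
          calc ((2*m-1 : ℕ) : ZMod (2*m)) + 1 = ((2*m-1+1 : ℕ) : ZMod (2*m)) := by
                push_cast; ring
            _ = ((2*m : ℕ) : ZMod (2*m)) := by congr 1; omega
            _ = 0 := h0
        have hodd : t.val % 2 = 1 := by omega
        have hhalf1 : t.val / 2 = m - 1 := by omega
        simp only [hZ, ht1]
        rw [if_neg (by omega), if_pos (by rw [ZMod.val_zero])]
        rw [hhalf1]
        have hz0 : (0 : ZMod (2*m)).val = 0 := ZMod.val_zero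
        rw [hz0]
        have hkey : (((m-1 : ℕ)) : ZMod m) + 1 = ((0/2 : ℕ) : ZMod m) := by
          rw [Nat.cast_sub (by omega), ZMod.natCast_self]
          push_cast
          ring
        rw [← hkey]
        exact (hK _).1 (hxK _) (hvmem1 _) (hxnv _ _)
      · have hstep : (t+1).val = t.val + 1 := by
          rw [ZMod.val_add, zmod_val_one' (by omega)]
          exact Nat.mod_eq_of_lt (by omega)
        by_cases hpar : t.val % 2 = 0
        · simp only [hZ, hstep]
          rw [if_pos hpar, if_neg (by omega)]
          have h4 : (t.val + 1) / 2 = t.val / 2 := by omega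
          rw [h4]
          exact ((hK _).1 (hxK _) (hvmem _) (hxnv _ _)).symm
        · simp only [hZ, hstep]
          rw [if_neg hpar, if_pos (by omega)]
          have h4 : (t.val + 1) / 2 = t.val / 2 + 1 := by omega
          rw [h4]
          have h5 : ((t.val / 2 + 1 : ℕ) : ZMod m) = ((t.val / 2 : ℕ) : ZMod m) + 1 := by
            push_cast; ring
          rw [h5]
          exact (hK _).1 (hxK _) (hvmem1 _) (hxnv _ _)
    -- strong chord of the long cycle gives the contradiction
    obtain ⟨p, q, ⟨⟨hpq_adj, hq1c, hp1c⟩, hodd⟩⟩ :=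
      hsc.2 (2*m) hm6 ⟨m, by ring⟩ Z ⟨hZinj, hZadj⟩
    have hparpq : p.val % 2 ≠ q.val % 2 := by
      have := zmod_par (n := 2*m) ⟨m, by ring⟩ p q
      rw [Nat.odd_iff] at hodd
      omega
    have key : ∀ p q : ZMod (2*m), p.val % 2 = 0 → q.val % 2 = 1 →
        G.Adj (Z p) (Z q) → q ≠ p + 1 → p ≠ q + 1 → False := by
      intro p q hp hq hA hq1 hp1
      have hα : p.val / 2 < m := hhalf p
      have hβ : q.val / 2 < m := hhalf q
      have hZp : Z p = v ((p.val / 2 : ℕ) : ZMod m) := by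
        simp only [hZ]; rw [if_pos hp]
      have hZq : Z q = x ((q.val / 2 : ℕ) : ZMod m) := by
        simp only [hZ]; rw [if_neg (by omega)]
      rw [hZp, hZq] at hA
      refine hxprop ((q.val / 2 : ℕ) : ZMod m) ((p.val / 2 : ℕ) : ZMod m) ?_ ?_ hA.symm
      · intro h
        have hcase := cast_eq_cases (n := m) (by omega) (a := p.val / 2) (b := q.val / 2)
          (by omega) (by omega) h
        have hαβ : p.val / 2 = q.val / 2 := by omega
        apply hq1
        have hstep : (p+1).val = p.val + 1 := by
          rw [ZMod.val_add, zmod_val_one' (by omega)]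
          exact Nat.mod_eq_of_lt (by omega)
        exact ZMod.val_injective _ (by omega)
      · intro h
        have h2 : ((p.val / 2 : ℕ) : ZMod m) = ((q.val / 2 + 1 : ℕ) : ZMod m) := by
          push_cast; exact h
        have hcase := cast_eq_cases (n := m) (by omega) (a := p.val / 2)
          (b := q.val / 2 + 1) (by omega) (by omega) h2
        apply hp1
        rcases hcase with hcase | hcase | hcase
        · have hstep : (q+1).val = q.val + 1 := by
            rw [ZMod.val_add, zmod_val_one' (by omega)]
            exact Nat.mod_eq_of_lt (by omega)
          exact ZMod.val_injective _ (by omega)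
        · have hq0 : q.val = 2*m - 1 := by omega
          have hp0 : p.val = 0 := by omega
          have hstep : (q+1).val = 0 := by
            rw [ZMod.val_add, zmod_val_one' (by omega), hq0]
            have h6 : 2*m - 1 + 1 = 2*m := by omega
            rw [h6]
            exact Nat.mod_self _
          exact ZMod.val_injective _ (by rw [hstep, hp0])
        · omega
    rcases Nat.mod_two_eq_zero_or_one p.val with hp | hp
    · exact key p q hp (by omega) hpq_adj hq1c hp1c
    · exact key q p (by omega) hp hpq_adj.symm hp1c hq1c

lemma sc_no_config [Fintype V] (hsc : G.StronglyChordal) (hcfg : HasConfig G) : False := by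
  obtain ⟨m, hm3, v, K, hv, hK, hmem⟩ := hcfg
  exact sc_no_config_size hsc m hm3 v K hv hK hmem

end Farber

namespace Farber

variable {V : Type*} {G : SimpleGraph V}

lemma not_tb_config [Fintype V] (h : ¬ TotallyBalanced G.cliqueMatrix) : HasConfig G := by
  classical
  rw [TotallyBalanced, not_not] at h
  obtain ⟨kk, hkk3, rr, cc, hrinj, hcinj, hdist, hrow, hcol⟩ := h
  set P : Fin kk → Fin kk → Prop := fun i j => rr i ∈ (cc j).1 with hP
  have hPM : ∀ i j, G.cliqueMatrix (rr i) (cc j) = if P i j then 1 else 0 := fun i j => rfl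
  have hrowc : ∀ i, (Finset.univ.filter (fun j => P i j)).card = 2 := by
    intro i
    have h0 := hrow i
    rw [Finset.sum_congr rfl (fun j _ => hPM i j), Finset.sum_boole] at h0
    exact_mod_cast h0
  have hcolc : ∀ j, (Finset.univ.filter (fun i => P i j)).card = 2 := by
    intro j
    have h0 := hcol j
    rw [Finset.sum_congr rfl (fun i _ => hPM i j), Finset.sum_boole] at h0
    exact_mod_cast h0
  have hother : ∀ (Q : Fin kk → Prop), ((Finset.univ.filter (fun x => Q x)).card = 2) →
      ∀ (x : Fin kk), Q x → ∃ y, (y ≠ x ∧ Q y) ∧ ∀ z, z ≠ x → Q z → z = y := by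
    intro Q hQ x hx
    obtain ⟨a, b, hab, he⟩ := Finset.card_eq_two.mp hQ
    have hmem : ∀ z, Q z ↔ (z = a ∨ z = b) := by
      intro z
      constructor
      · intro hz
        have : z ∈ Finset.univ.filter (fun x => Q x) := by simp [hz]
        rw [he] at this
        simpa using this
      · intro hz
        have : z ∈ ({a, b} : Finset (Fin kk)) := by simpa using hz
        rw [← he] at this
        simpa using this
    rcases (hmem x).mp hx with rfl | rfl
    · refine ⟨b, ⟨hab.symm, (hmem b).mpr (Or.inr rfl)⟩, ?_⟩
      intro z hz hQz
      rcases (hmem z).mp hQz with rfl | rfl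
      · exact absurd rfl hz
      · rfl
    · refine ⟨a, ⟨hab, (hmem a).mpr (Or.inl rfl)⟩, ?_⟩
      intro z hz hQz
      rcases (hmem z).mp hQz with rfl | rfl
      · rfl
      · exact absurd rfl hz
  have hotherc : ∀ i j, P i j → ∃ j', (j' ≠ j ∧ P i j') ∧ ∀ z, z ≠ j → P i z → z = j' :=
    fun i j hij => hother (fun z => P i z) (hrowc i) j hij
  have hotherr : ∀ i j, P i j → ∃ i', (i' ≠ i ∧ P i' j) ∧ ∀ z, z ≠ i → P z j → z = i' :=
    fun i j hij => hother (fun z => P z j) (hcolc j) i hij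
  choose fc hfc hfcu using hotherc
  choose fr hfr hfru using hotherr
  let E := {e : Fin kk × Fin kk // P e.1 e.2}
  let κ : E → E := fun e => ⟨(e.1.1, fc e.1.1 e.1.2 e.2), (hfc e.1.1 e.1.2 e.2).2⟩
  let ρ : E → E := fun e => ⟨(fr e.1.1 e.1.2 e.2, e.1.2), (hfr e.1.1 e.1.2 e.2).2⟩
  let σf : E → E := fun e => κ (ρ e)
  let τ : E → E := fun e => ρ (κ e)
  have hκκ : ∀ e, κ (κ e) = e := by
    intro e
    have h1 := hfcu e.1.1 (fc e.1.1 e.1.2 e.2) (hfc e.1.1 e.1.2 e.2).2 e.1.2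
      (Ne.symm (hfc e.1.1 e.1.2 e.2).1) e.2
    apply Subtype.ext
    show (e.1.1, fc e.1.1 (fc e.1.1 e.1.2 e.2) _) = e.1
    rw [← h1]
  have hρρ : ∀ e, ρ (ρ e) = e := by
    intro e
    have h1 := hfru (fr e.1.1 e.1.2 e.2) e.1.2 (hfr e.1.1 e.1.2 e.2).2 e.1.1
      (Ne.symm (hfr e.1.1 e.1.2 e.2).1) e.2
    apply Subtype.ext
    show (fr (fr e.1.1 e.1.2 e.2) e.1.2 _, e.1.2) = e.1
    rw [← h1]
  have hτσ : ∀ e, τ (σf e) = e := by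
    intro e
    show ρ (κ (κ (ρ e))) = e
    rw [hκκ]
    exact hρρ _
  have hσinj : Function.Injective σf := Function.LeftInverse.injective hτσ
  have hκinj : Function.Injective κ := Function.LeftInverse.injective hκκ
  have hκne : ∀ e : E, κ e ≠ e := by
    intro e he
    exact (hfc e.1.1 e.1.2 e.2).1 (congrArg (fun x => x.1.2) he)
  have hρne : ∀ e : E, ρ e ≠ e := by
    intro e he
    exact (hfr e.1.1 e.1.2 e.2).1 (congrArg (fun x => x.1.1) he)
  -- a starting state
  have hi0 : ∃ e : E, True := by
    have h0 : (Finset.univ.filter (fun j => P ⟨0, by omega⟩ j)).Nonempty := by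
      rw [← Finset.card_pos, hrowc]
      norm_num
    obtain ⟨j₀, hj₀⟩ := h0
    rw [Finset.mem_filter] at hj₀
    exact ⟨⟨(⟨0, by omega⟩, j₀), hj₀.2⟩, trivial⟩
  obtain ⟨e₀, -⟩ := hi0
  let f : ℕ → E := fun t => σf^[t] e₀
  have hf_add : ∀ t, f (t + 1) = σf (f t) := by
    intro t
    show σf^[t+1] e₀ = σf (σf^[t] e₀)
    rw [Function.iterate_succ_apply']
  have hperiodic : e₀ ∈ Function.periodicPts σf := by
    have hcard : Fintype.card E < Fintype.card (Fin (Fintype.card E + 1)) := by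
      rw [Fintype.card_fin]; omega
    obtain ⟨a, b, hab, hfab⟩ := Fintype.exists_ne_map_eq_of_card_lt
      (fun t : Fin (Fintype.card E + 1) => σf^[(t : ℕ)] e₀) hcard
    have key : ∀ (a b : ℕ), a < b → σf^[a] e₀ = σf^[b] e₀ →
        e₀ ∈ Function.periodicPts σf := by
      intro a b hab' heq
      rw [Function.mem_periodicPts]
      refine ⟨b - a, by omega, ?_⟩
      show σf^[b-a] e₀ = e₀
      have h1 : σf^[a] (σf^[b-a] e₀) = σf^[a] e₀ := by
        rw [← Function.iterate_add_apply]
        have he2 : a + (b - a) = b := by omega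
        rw [he2]
        exact heq.symm
      exact hσinj.iterate a h1
    rcases Nat.lt_or_ge (a : ℕ) (b : ℕ) with hl | hl
    · exact key _ _ hl hfab
    · have hl2 : (b : ℕ) < (a : ℕ) := by
        rcases Nat.lt_or_ge (b : ℕ) (a : ℕ) with h2 | h2
        · exact h2
        · exact absurd (Fin.ext (by omega)) hab
      exact key _ _ hl2 hfab.symm
  set p := Function.minimalPeriod σf e₀ with hp
  have hppos : 0 < p := Function.minimalPeriod_pos_of_mem_periodicPts hperiodic
  have hpp : σf^[p] e₀ = e₀ := Function.isPeriodicPt_minimalPeriod σf e₀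
  have hfmod : ∀ t, f (t % p) = f t := fun t => Function.iterate_mod_minimalPeriod_eq
  have hfinj : ∀ a b, a < p → b < p → f a = f b → a = b := by
    intro a b ha hb heq
    have key : ∀ a b : ℕ, a < b → b < p → f a = f b → False := by
      intro a b hab hbp heq'
      have h1 : σf^[a] (σf^[b-a] e₀) = σf^[a] e₀ := by
        rw [← Function.iterate_add_apply]
        have he2 : a + (b - a) = b := by omega
        rw [he2]
        exact heq'.symm
      have h2 : σf^[b-a] e₀ = e₀ := hσinj.iterate a h1
      have h3 := Function.IsPeriodicPt.minimalPeriod_le (show 0 < b - a by omega) h2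
      omega
    rcases Nat.lt_trichotomy a b with hl | hl | hl
    · exact absurd (key a b hl hb heq) not_false
    · exact hl
    · exact absurd (key b a hl ha heq.symm) not_false
  have hfper : ∀ t N, f (t + N * p) = f t := by
    intro t N
    induction N with
    | zero => simp
    | succ N ihN =>
      have he3 : t + (N+1) * p = (t + N*p) + p := by ring
      rw [he3]
      show σf^[(t + N*p) + p] e₀ = f t
      rw [Function.iterate_add_apply, hpp]
      exact ihN
  have hκσ : ∀ e, κ (σf e) = ρ e := fun e => hκκ (ρ e)
  have hτf : ∀ t, 1 ≤ t → τ (f t) = f (t - 1) := by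
    intro t ht
    obtain ⟨s, rfl⟩ : ∃ s, t = s + 1 := ⟨t - 1, by omega⟩
    rw [hf_add s, hτσ]
    exact congrArg f (by omega)
  have hchain : ∀ (a s t : ℕ), a ≤ t → κ (f s) = f t → κ (f (s + a)) = f (t - a) := by
    intro a
    induction a with
    | zero => intro s t _ h0; simpa using h0
    | succ a iha =>
      intro s t ha h0
      have h1 := iha s t (by omega) h0
      have h2 : κ (f (s + a + 1)) = ρ (f (s + a)) := by
        rw [hf_add]
        exact hκσ _
      have h3 : ρ (f (s + a)) = τ (f (t - a)) := by
        rw [← h1]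
        show ρ (f (s+a)) = ρ (κ (κ (f (s+a))))
        rw [hκκ]
      have h4 : τ (f (t - a)) = f (t - a - 1) := hτf _ (by omega)
      have h5 : s + (a+1) = s + a + 1 := by ring
      rw [h5, h2, h3, h4]
      exact congrArg f (by omega)
  have hnoshift : ∀ u, κ (f u) ≠ f (u + 1) := by
    intro u hu
    have h1 : f (u+1) = κ (ρ (f u)) := hf_add u
    rw [h1] at hu
    exact hρne _ (hκinj hu).symm
  have hnoκ : ∀ s t, κ (f s) ≠ f t := by
    intro s t hlink
    have hmul : (s+1) * 1 ≤ (s+1) * p := Nat.mul_le_mul_left (s+1) hppos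
    have hlift : κ (f s) = f (t + (s+1) * p) := by rw [hfper]; exact hlink
    set t' := t + (s+1)*p with ht'
    have hts : s < t' := by omega
    rcases Nat.even_or_odd (t' - s) with hDe | hDo
    · obtain ⟨d, hd⟩ := hDe
      have hch := hchain d s t' (by omega) hlift
      have heq : t' - d = s + d := by omega
      rw [heq] at hch
      exact hκne _ hch
    · obtain ⟨d, hd⟩ := hDo
      have hch := hchain d s t' (by omega) hlift
      have heq : t' - d = (s + d) + 1 := by omega
      rw [heq] at hch
      exact hnoshift _ hch
  have hnoρ : ∀ s t, ρ (f s) ≠ f t := by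
    intro s t hlink
    have h2 : κ (f t) = f (s + 1) := by
      rw [← hlink, hf_add]
    exact hnoκ t (s+1) h2
  -- row/column injectivity along the walk
  have hrowinj : ∀ a b, a < p → b < p → (f a).1.1 = (f b).1.1 → a = b := by
    intro a b ha hb heq
    by_cases hcoleq : (f a).1.2 = (f b).1.2
    · exact hfinj a b ha hb (Subtype.ext (Prod.ext heq hcoleq))
    · exfalso
      have hmem : P (f a).1.1 (f b).1.2 := by rw [heq]; exact (f b).2
      have huniq := hfcu (f a).1.1 (f a).1.2 (f a).2 (f b).1.2
        (fun hh => hcoleq hh.symm) hmem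
      apply hnoκ a b
      apply Subtype.ext
      exact Prod.ext heq huniq.symm
  have hcolinj : ∀ a b, a < p → b < p → (f a).1.2 = (f b).1.2 → a = b := by
    intro a b ha hb heq
    by_cases hroweq : (f a).1.1 = (f b).1.1
    · exact hfinj a b ha hb (Subtype.ext (Prod.ext hroweq heq))
    · exfalso
      have hmem : P (f b).1.1 (f a).1.2 := by rw [heq]; exact (f b).2
      have huniq := hfru (f a).1.1 (f a).1.2 (f a).2 (f b).1.1
        (fun hh => hroweq hh.symm) hmem
      apply hnoρ a b
      apply Subtype.ext
      exact Prod.ext huniq.symm heq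
  -- p ≥ 3
  have hp1 : p ≠ 1 := by
    intro h1
    have hfix : σf e₀ = e₀ := by
      have := hpp
      rw [h1] at this
      simpa using this
    have h2 : ρ e₀ = κ e₀ := by
      have h3 := congrArg κ hfix
      rw [hκκ] at h3
      exact h3
    exact (hfr e₀.1.1 e₀.1.2 e₀.2).1 (congrArg (fun x => x.1.1) h2)
  have hp2 : p ≠ 2 := by
    intro h2p
    have hf1 : f 1 = κ (ρ e₀) := hf_add 0
    have hf2 : f 2 = e₀ := by
      have := hpp
      rw [h2p] at this
      exact this
    have hcol1 : (f 1).1.2 ≠ e₀.1.2 := by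
      rw [hf1]
      exact (hfc (ρ e₀).1.1 (ρ e₀).1.2 (ρ e₀).2).1
    -- patterns of columns e₀.1.2 and (f 1).1.2 agree
    have hrow1 : (f 1).1.1 = (ρ e₀).1.1 := by rw [hf1]
    have hρf1 : κ (ρ (f 1)) = e₀ := by
      have h9 : f (1 + 1) = σf (f 1) := hf_add 1
      have h10 : σf (f 1) = e₀ := by rw [← h9]; exact hf2
      exact h10
    have hrowρf1 : (ρ (f 1)).1.1 = e₀.1.1 := by
      have := congrArg (fun x => x.1.1) hρf1
      exact this
    have hpat : ∀ i, P i e₀.1.2 ↔ P i (f 1).1.2 := by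
      intro i
      constructor
      · intro hi
        by_cases hie : i = e₀.1.1
        · -- i is the row of e₀ : then P i (f 1).col since ρ (f 1) has row e₀.row, col (f 1).col
          have := (ρ (f 1)).2
          have hcolρ : (ρ (f 1)).1.2 = (f 1).1.2 := rfl
          rw [hcolρ, hrowρf1] at this
          rw [hie]
          exact this
        · have h11 := hfru e₀.1.1 e₀.1.2 e₀.2 i hie hi
          have h12 : fr e₀.1.1 e₀.1.2 e₀.2 = (f 1).1.1 := hrow1.symm
          rw [h11, h12]
          exact (f 1).2
      · intro hi
        by_cases hie : i = (f 1).1.1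
        · -- i = (f 1).row = (ρ e₀).row : P i e₀.col since ρ e₀ has col e₀.col
          have := (ρ e₀).2
          have hcolρ : (ρ e₀).1.2 = e₀.1.2 := rfl
          rw [hcolρ] at this
          rw [hie, hrow1]
          exact this
        · have h11 := hfru (f 1).1.1 (f 1).1.2 (f 1).2 i hie hi
          have h12 : fr (f 1).1.1 (f 1).1.2 (f 1).2 = e₀.1.1 := hrowρf1
          rw [h11, h12]
          exact e₀.2
    have heq12 : e₀.1.2 = (f 1).1.2 := by
      apply hdist
      intro i
      simp only [hPM]
      exact if_congr (hpat i) rfl rfl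
    exact hcol1 heq12.symm
  have hp3 : 3 ≤ p := by omega
  haveI : NeZero p := ⟨by omega⟩
  -- the configuration
  have hvi1 : ∀ j : ZMod p, (j + 1).val = (j.val + 1) % p := by
    intro j
    rw [ZMod.val_add, zmod_val_one' (by omega)]
  have hmemiff : ∀ (x : Fin kk) (b : ℕ), P x (f b).1.2 ↔
      (x = (f b).1.1 ∨ x = (f (b+1)).1.1) := by
    intro x b
    have hrowstep : (f (b+1)).1.1 = (ρ (f b)).1.1 := by rw [hf_add]
    constructor
    · intro hx
      by_cases hxe : x = (f b).1.1
      · exact Or.inl hxe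
      · right
        have := hfru (f b).1.1 (f b).1.2 (f b).2 x hxe hx
        rw [this, hrowstep]
    · intro hx
      rcases hx with rfl | rfl
      · exact (f b).2
      · rw [hrowstep]
        exact (ρ (f b)).2
  refine ⟨p, hp3, fun t => rr ((f t.val).1.1), fun t => (cc ((f t.val).1.2)).1, ?_, ?_, ?_⟩
  · intro a b hab
    have h1 := hrinj hab
    have h2 := hrowinj a.val b.val (ZMod.val_lt a) (ZMod.val_lt b) h1
    exact ZMod.val_injective p h2
  · intro j
    exact (cc ((f j.val).1.2)).2
  · intro i j
    have hLHS : (rr ((f i.val).1.1) ∈ (cc ((f j.val).1.2)).1) ↔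
        P ((f i.val).1.1) ((f j.val).1.2) := Iff.rfl
    rw [hLHS, hmemiff]
    constructor
    · intro hx
      rcases hx with hx | hx
      · left
        have := hrowinj i.val j.val (ZMod.val_lt i) (ZMod.val_lt j) hx
        exact (ZMod.val_injective p this).symm
      · right
        have hmodstep : f ((j+1).val) = f (j.val + 1) := by
          rw [hvi1, hfmod]
        have h2 : (f i.val).1.1 = (f ((j+1).val)).1.1 := by rw [hmodstep]; exact hx
        have h3 := hrowinj i.val (j+1).val (ZMod.val_lt i) (ZMod.val_lt (j+1)) h2
        exact (ZMod.val_injective p h3).symm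
    · intro hx
      rcases hx with hx | hx
      · left
        rw [← hx]
      · right
        have hmodstep : f ((j+1).val) = f (j.val + 1) := by
          rw [hvi1, hfmod]
        rw [← hx, ← hmodstep]

end Farber

/-- Farber: a finite simple graph is strongly chordal iff its clique matrix is
totally balanced. -/
theorem stronglyChordal_iff_cliqueMatrix_totallyBalanced {V : Type*} [Fintype V]
    (G : SimpleGraph V) :
    G.StronglyChordal ↔ TotallyBalanced G.cliqueMatrix := by
  constructor
  · intro hsc
    by_contra htb
    exact Farber.sc_no_config hsc (Farber.not_tb_config htb)
  · intro htb
    by_contra hsc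
    have hcfg : Farber.HasConfig G := by
      by_cases hch : G.Chordal
      · have hnall : ¬ ∀ (n : ℕ), 6 ≤ n → Even n → ∀ f : ZMod n → V, G.IsCycleEmb f →
            ∃ i j, G.IsStrongChordOf f i j := fun hall => hsc ⟨hch, hall⟩
        push_neg at hnall
        obtain ⟨n, hn6, hev, f, hcyc, hnsc⟩ := hnall
        exact Farber.badcycle_config hch hn6 hev f hcyc hnsc
      · exact Farber.not_chordal_config hch
    exact Farber.config_not_tb hcfg htb
end
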